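/- arXiv:2510.02587 — 3 statements merged into one kernel-verified Lean document; each statement's English description precedes it below -/
import Mathlib

section
/- For every n ≥ 1, every d ≥ 0, and every family (a_ν) of elements of K indexed by the compositions ν ∈ ℕ^n with |ν| ≤ d, there exists a unique polynomial f ∈ K[x_1,…,x_n] of total degree at most d such that f(ν̃) = a_ν for every composition ν with |ν| ≤ d. In particular, if f has total degree at most d and f(ν̃) = 0 for every composition ν with |ν| ≤ d, then f = 0. -/
open MvPolynomial

noncomputable section
open scoped Classical

/-- The field `K = ℚ(q,t)`. -/
abbrev K : Type := FractionRing (MvPolynomial (Fin 2) ℚ)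

/-- The indeterminate `q` as an element of `K`. -/
def qq : K := algebraMap (MvPolynomial (Fin 2) ℚ) K (X 0)

/-- The indeterminate `t` as an element of `K`. -/
def tt : K := algebraMap (MvPolynomial (Fin 2) ℚ) K (X 1)

/-- The size `|ν|` of a composition. -/
def csize {n : ℕ} (ν : Fin n → ℕ) : ℕ := ∑ i, ν i

/-- `k_i(ν) = #{j < i : ν_j > ν_i} + #{j > i : ν_j ≥ ν_i}`. -/
def kstat {n : ℕ} (ν : Fin n → ℕ) (i : Fin n) : ℕ :=
  Set.ncard {j : Fin n | j < i ∧ ν i < ν j} + Set.ncard {j : Fin n | i < j ∧ ν i ≤ ν j}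

/-- The evaluation point `ν̃ = (q^{ν_i} t^{-k_i(ν)})_i`. -/
def evalPt {n : ℕ} (ν : Fin n → ℕ) : Fin n → K :=
  fun i => qq ^ ν i * tt ^ (-(kstat ν i : ℤ))

/-- Weakly decreasing composition. -/
def IsPartition {n : ℕ} (l : Fin n → ℕ) : Prop := ∀ i j : Fin n, i ≤ j → l j ≤ l i

/-- The action `σ·μ := μ ∘ σ⁻¹`. -/
def permAct {n : ℕ} (σ : Equiv.Perm (Fin n)) (μ : Fin n → ℕ) : Fin n → ℕ := μ ∘ ⇑σ.symm

/-- `S_n(λ)`: the rearrangements of `λ`. -/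
def Sn {n : ℕ} (l : Fin n → ℕ) : Set (Fin n → ℕ) :=
  {μ | ∃ σ : Equiv.Perm (Fin n), permAct σ l = μ}

/-- The rearrangements of `λ` as a `Finset`. -/
def SnFinset {n : ℕ} (l : Fin n → ℕ) : Finset (Fin n → ℕ) :=
  Finset.image (fun σ : Equiv.Perm (Fin n) => permAct σ l) Finset.univ

/-- The exponent `Finsupp` of the monomial `x^μ`. -/
def expOf {n : ℕ} (μ : Fin n → ℕ) : Fin n →₀ ℕ := Finsupp.equivFunOnFinite.symm μ

/-- Characterization of the interpolation nonsymmetric Macdonald polynomial `E*_μ`. -/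
def IsEstar {n : ℕ} (μ : Fin n → ℕ) (f : MvPolynomial (Fin n) K) : Prop :=
  f.totalDegree ≤ csize μ ∧ coeff (expOf μ) f = 1 ∧
    ∀ ν : Fin n → ℕ, csize ν ≤ csize μ → ν ≠ μ → eval (evalPt ν) f = 0

/-- The interpolation nonsymmetric Macdonald polynomial `E*_μ` (unique by Knop–Sahi). -/
def Estar {n : ℕ} (μ : Fin n → ℕ) : MvPolynomial (Fin n) K :=
  if h : ∃ f, IsEstar μ f then h.choose else 0

/-- Characterization of the interpolation (symmetric) Macdonald polynomial `P*_λ`. -/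
def IsPstar {n : ℕ} (l : Fin n → ℕ) (f : MvPolynomial (Fin n) K) : Prop :=
  f.IsSymmetric ∧ f.totalDegree ≤ csize l ∧ coeff (expOf l) f = 1 ∧
    ∀ ν : Fin n → ℕ, IsPartition ν → csize ν ≤ csize l → ν ≠ l → eval (evalPt ν) f = 0

/-- The interpolation Macdonald polynomial `P*_λ`. -/
def Pstar {n : ℕ} (l : Fin n → ℕ) : MvPolynomial (Fin n) K :=
  if h : ∃ f, IsPstar l f then h.choose else 0

/-- The space `V*_λ`. -/
def Vstar {n : ℕ} (l : Fin n → ℕ) : Submodule K (MvPolynomial (Fin n) K) :=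
  (restrictTotalDegree (Fin n) K (csize l)) ⊓
    ⨅ (ν : Fin n → ℕ) (_ : csize ν ≤ csize l ∧ ν ∉ Sn l),
      LinearMap.ker (aeval (R := K) (evalPt ν)).toLinearMap

/-- Exchange of the variables `x_i` and `x_j` in a polynomial. -/
def swapVars {n : ℕ} (i j : Fin n) (f : MvPolynomial (Fin n) K) : MvPolynomial (Fin n) K :=
  rename (Equiv.swap i j) f

/-- Exact division of polynomials: the unique `g` with `a = b * g` when it exists. -/
def exactDiv {n : ℕ} (a b : MvPolynomial (Fin n) K) : MvPolynomial (Fin n) K :=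
  if h : ∃ g, a = b * g then h.choose else 0

/-- The Hecke operator
`T f = t f − ((t x_i − x_j)/(x_i − x_j))·(f − s_i f)` (where `j = i+1`). -/
def hecke {n : ℕ} (i j : Fin n) (f : MvPolynomial (Fin n) K) : MvPolynomial (Fin n) K :=
  C tt * f - (C tt * X i - X j) * exactDiv (f - swapVars i j f) (X i - X j)

/-- The Coxeter length of a permutation (number of inversions). -/
def permLength {n : ℕ} (σ : Equiv.Perm (Fin n)) : ℕ :=
  Set.ncard {p : Fin n × Fin n | p.1 < p.2 ∧ σ p.2 < σ p.1}

/-- The adjacent transposition `s_i = (i, i+1)` (0-indexed). -/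
def adjSwap {n : ℕ} (i : {i : ℕ // i + 1 < n}) : Equiv.Perm (Fin n) :=
  Equiv.swap ⟨i.1, Nat.lt_of_succ_lt i.2⟩ ⟨i.1 + 1, i.2⟩

/-- The Hecke operator `T_i` for an adjacent transposition index. -/
def heckeAt {n : ℕ} (i : {i : ℕ // i + 1 < n}) :
    MvPolynomial (Fin n) K → MvPolynomial (Fin n) K :=
  hecke ⟨i.1, Nat.lt_of_succ_lt i.2⟩ ⟨i.1 + 1, i.2⟩

/-- `T_{i_1} ⋯ T_{i_ℓ} f` for a word `w = [i_1, …, i_ℓ]`. -/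
def Tword {n : ℕ} (w : List {i : ℕ // i + 1 < n}) (f : MvPolynomial (Fin n) K) :
    MvPolynomial (Fin n) K :=
  w.foldr heckeAt f

/-- `w` is a reduced word for `σ`. -/
def IsReducedWordOf {n : ℕ} (w : List {i : ℕ // i + 1 < n}) (σ : Equiv.Perm (Fin n)) : Prop :=
  (w.map adjSwap).prod = σ ∧ w.length = permLength σ

/-- `T_σ`, computed from a reduced word of `σ` (independent of the choice, by the
Hecke algebra relations). -/
def Tsigma {n : ℕ} (σ : Equiv.Perm (Fin n)) :
    MvPolynomial (Fin n) K → MvPolynomial (Fin n) K :=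
  if h : ∃ w, IsReducedWordOf w σ then Tword h.choose else id

/-- `σ_μ`: the (unique) shortest permutation with `σ·l = μ`. -/
def sigmaMin {n : ℕ} (l μ : Fin n → ℕ) : Equiv.Perm (Fin n) :=
  if h : ∃ σ, permAct σ l = μ ∧ ∀ τ, permAct τ l = μ → permLength σ ≤ permLength τ then
    h.choose else 1

/-- The weakly decreasing rearrangement of a composition. -/
def sortDesc {n : ℕ} (μ : Fin n → ℕ) : Fin n → ℕ :=
  if h : ∃ l, IsPartition l ∧ μ ∈ Sn l then h.choose else μ

/-- The interpolation ASEP polynomial `f*_μ = T_{σ_μ} E*_λ`, where `λ` is the weakly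
decreasing rearrangement of `μ`. -/
def fstar {n : ℕ} (μ : Fin n → ℕ) : MvPolynomial (Fin n) K :=
  Tsigma (sigmaMin (sortDesc μ) μ) (Estar (sortDesc μ))

/-- The composition with entries `i` and `j` exchanged. -/
def swapEntries {n : ℕ} (i j : Fin n) (μ : Fin n → ℕ) : Fin n → ℕ := μ ∘ ⇑(Equiv.swap i j)
section QT

lemma tt_ne_zero : tt ≠ 0 := by
  unfold tt
  intro h
  have := (map_eq_zero_iff _ (IsFractionRing.injective (MvPolynomial (Fin 2) ℚ) K)).mp h
  exact MvPolynomial.X_ne_zero _ this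

lemma qq_ne_zero : qq ≠ 0 := by
  unfold qq
  intro h
  have := (map_eq_zero_iff _ (IsFractionRing.injective (MvPolynomial (Fin 2) ℚ) K)).mp h
  exact MvPolynomial.X_ne_zero _ this

lemma qt_pow_inj {a b c e : ℕ} (h : qq ^ a * tt ^ (-(b:ℤ)) = qq ^ c * tt ^ (-(e:ℤ))) :
    a = c ∧ b = e := by
  have ht := tt_ne_zero
  have h2 : qq ^ a * tt ^ (e:ℤ) = qq ^ c * tt ^ (b:ℤ) := by
    have := congrArg (· * tt ^ ((b:ℤ) + (e:ℤ))) h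
    rw [mul_assoc, mul_assoc, ← zpow_add₀ ht, ← zpow_add₀ ht] at this
    convert this using 3 <;> ring
  rw [zpow_natCast, zpow_natCast] at h2
  have h3 : (X 0 : MvPolynomial (Fin 2) ℚ) ^ a * X 1 ^ e = X 0 ^ c * X 1 ^ b := by
    apply IsFractionRing.injective (MvPolynomial (Fin 2) ℚ) K
    push_cast [map_mul, map_pow]
    exact h2
  simp only [X_pow_eq_monomial, monomial_mul, one_mul, monomial_eq_monomial_iff] at h3
  rcases h3 with ⟨hs, -⟩ | ⟨h1, -⟩
  · constructor
    · have := DFunLike.congr_fun hs 0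
      simpa [Finsupp.single_apply] using this
    · have := DFunLike.congr_fun hs 1
      have h1 : ((1:Fin 2) = 0) = False := by simp [Fin.ext_iff]
      simpa [Finsupp.single_apply, h1] using this.symm
  · simp at h1

end QT
section Deg

lemma deg_aeval_le {n m : ℕ} (ψ : Fin n → MvPolynomial (Fin m) K)
    (hψ : ∀ i, (ψ i).totalDegree ≤ 1) (f : MvPolynomial (Fin n) K) :
    (aeval ψ f).totalDegree ≤ f.totalDegree := by
  rw [aeval_def, eval₂_eq]
  refine (totalDegree_finset_sum _ _).trans (Finset.sup_le fun d hd => ?_)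
  refine (totalDegree_mul _ _).trans ?_
  rw [MvPolynomial.algebraMap_apply, totalDegree_C, zero_add]
  refine (totalDegree_finset_prod _ _).trans ?_
  refine le_trans ?_ (le_totalDegree hd)
  rw [Finsupp.sum]
  refine Finset.sum_le_sum fun i hi => ?_
  refine (totalDegree_pow _ _).trans ?_
  simpa using Nat.mul_le_mul_left (d i) (hψ i)

lemma deg_cofactor {m d : ℕ} {c : K} {h : MvPolynomial (Fin (m+1)) K}
    (hd : ((X 0 - C c) * h).totalDegree ≤ d + 1) : h.totalDegree ≤ d := by
  by_contra hcon
  push_neg at hcon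
  have hne : h ≠ 0 := by rintro rfl; simp at hcon
  obtain ⟨s, hs, hdeg⟩ : ∃ s ∈ h.support, h.totalDegree = s.sum fun _ e => e :=
    Finset.exists_mem_eq_sup _ (MvPolynomial.support_nonempty.mpr hne) _
  have hsum : ((Finsupp.single (0 : Fin (m+1)) 1 + s).sum fun _ e => e)
      = 1 + s.sum fun _ e => e := by
    rw [Finsupp.sum_add_index' (fun _ => rfl) (fun _ _ _ => rfl),
      Finsupp.sum_single_index rfl]
  have key : coeff (Finsupp.single 0 1 + s) ((X 0 - C c) * h) = coeff s h := by
    have he : (X 0 - C c) * h = X 0 * h - C c * h := by ring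
    have hz : coeff (Finsupp.single (0 : Fin (m+1)) 1 + s) h = 0 := by
      apply coeff_eq_zero_of_totalDegree_lt
      show h.totalDegree < (Finsupp.single (0 : Fin (m+1)) 1 + s).sum fun _ e => e
      rw [hsum]; omega
    rw [he, coeff_sub, coeff_X_mul, coeff_C_mul, hz, mul_zero, sub_zero]
  have hmem : Finsupp.single (0 : Fin (m+1)) 1 + s ∈ ((X 0 - C c) * h).support := by
    rw [mem_support_iff, key]
    exact mem_support_iff.mp hs
  have := le_trans (le_totalDegree hmem) hd
  rw [hsum] at this
  omega

end Deg
section Comb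

lemma ncard_succ_shift {m : ℕ} (Q : Fin (m+1) → Prop) (P : Fin m → Prop)
    (h0 : ¬ Q 0) (hs : ∀ k, Q k.succ ↔ P k) :
    Set.ncard {j | Q j} = Set.ncard {k | P k} := by
  have himg : {j | Q j} = Fin.succ '' {k | P k} := by
    ext j
    constructor
    · intro hj
      induction j using Fin.cases with
      | zero => exact absurd hj h0
      | succ k => exact ⟨k, (hs k).mp hj, rfl⟩
    · rintro ⟨k, hk, rfl⟩; exact (hs k).mpr hk
  rw [himg, Set.ncard_image_of_injective _ (Fin.succ_injective m)]

lemma ncard_succ_shift' {m : ℕ} (Q : Fin (m+1) → Prop) (P : Fin m → Prop)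
    (h0 : Q 0) (hs : ∀ k, Q k.succ ↔ P k) :
    Set.ncard {j | Q j} = Set.ncard {k | P k} + 1 := by
  have himg : {j | Q j} = insert 0 (Fin.succ '' {k | P k}) := by
    ext j
    constructor
    · intro hj
      induction j using Fin.cases with
      | zero => exact Set.mem_insert _ _
      | succ k => exact Set.mem_insert_of_mem _ ⟨k, (hs k).mp hj, rfl⟩
    · rintro (rfl | ⟨k, hk, rfl⟩)
      · exact h0
      · exact (hs k).mpr hk
  have h0n : (0 : Fin (m+1)) ∉ Fin.succ '' {k | P k} := by
    rintro ⟨k, -, hk⟩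
    exact Fin.succ_ne_zero k hk
  rw [himg, Set.ncard_insert_of_notMem h0n,
    Set.ncard_image_of_injective _ (Fin.succ_injective m)]

lemma ncard_castSucc_shift {m : ℕ} (Q : Fin (m+1) → Prop) (P : Fin m → Prop)
    (hl : ¬ Q (Fin.last m)) (hs : ∀ k, Q k.castSucc ↔ P k) :
    Set.ncard {j | Q j} = Set.ncard {k | P k} := by
  have himg : {j | Q j} = Fin.castSucc '' {k | P k} := by
    ext j
    constructor
    · intro hj
      induction j using Fin.lastCases with
      | last => exact absurd hj hl
      | cast k => exact ⟨k, (hs k).mp hj, rfl⟩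
    · rintro ⟨k, hk, rfl⟩; exact (hs k).mpr hk
  rw [himg, Set.ncard_image_of_injective _ (Fin.castSucc_injective m)]

lemma ncard_castSucc_shift' {m : ℕ} (Q : Fin (m+1) → Prop) (P : Fin m → Prop)
    (hl : Q (Fin.last m)) (hs : ∀ k, Q k.castSucc ↔ P k) :
    Set.ncard {j | Q j} = Set.ncard {k | P k} + 1 := by
  have himg : {j | Q j} = insert (Fin.last m) (Fin.castSucc '' {k | P k}) := by
    ext j
    constructor
    · intro hj
      induction j using Fin.lastCases with
      | last => exact Set.mem_insert _ _
      | cast k => exact Set.mem_insert_of_mem _ ⟨k, (hs k).mp hj, rfl⟩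
    · rintro (rfl | ⟨k, hk, rfl⟩)
      · exact hl
      · exact (hs k).mpr hk
  have h0n : Fin.last m ∉ Fin.castSucc '' {k | P k} := by
    rintro ⟨k, -, hk⟩
    exact absurd hk (Fin.castSucc_lt_last k).ne
  rw [himg, Set.ncard_insert_of_notMem h0n,
    Set.ncard_image_of_injective _ (Fin.castSucc_injective m)]

end Comb
section Kstat

/-- The shift map `Φν = (ν_m + 1, ν_0, …, ν_{m-1})`. -/
def phi {m : ℕ} (μ : Fin (m+1) → ℕ) : Fin (m+1) → ℕ :=
  Fin.cases (μ (Fin.last m) + 1) (fun i => μ i.castSucc)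

@[simp] lemma phi_zero {m : ℕ} (μ : Fin (m+1) → ℕ) : phi μ 0 = μ (Fin.last m) + 1 := rfl

@[simp] lemma phi_succ {m : ℕ} (μ : Fin (m+1) → ℕ) (i : Fin m) :
    phi μ i.succ = μ i.castSucc := by simp [phi]

lemma kstat_zero_of_zero {m : ℕ} (ν : Fin (m+1) → ℕ) (h0 : ν 0 = 0) : kstat ν 0 = m := by
  unfold kstat
  have h1 : {j : Fin (m+1) | j < 0 ∧ ν 0 < ν j} = ∅ := by
    ext j; simp [Fin.not_lt_zero]
  have h2 : Set.ncard {j : Fin (m+1) | 0 < j ∧ ν 0 ≤ ν j} = Set.ncard {_k : Fin m | True} :=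
    ncard_succ_shift _ _ (by simp) (fun k => by simp [h0, Fin.succ_pos])
  rw [h1, h2]
  simp [Set.ncard_univ]

lemma kstat_succ_of_zero {m : ℕ} (ν : Fin (m+1) → ℕ) (h0 : ν 0 = 0) (i : Fin m) :
    kstat ν i.succ = kstat (ν ∘ Fin.succ) i := by
  unfold kstat
  have h1 : Set.ncard {j : Fin (m+1) | j < i.succ ∧ ν i.succ < ν j}
      = Set.ncard {k : Fin m | k < i ∧ (ν ∘ Fin.succ) i < (ν ∘ Fin.succ) k} :=
    ncard_succ_shift _ _ (by simp [h0]) (fun k => by simp [Fin.succ_lt_succ_iff])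
  have h2 : Set.ncard {j : Fin (m+1) | i.succ < j ∧ ν i.succ ≤ ν j}
      = Set.ncard {k : Fin m | i < k ∧ (ν ∘ Fin.succ) i ≤ (ν ∘ Fin.succ) k} :=
    ncard_succ_shift _ _ (by simp [Fin.not_lt_zero]) (fun k => by simp [Fin.succ_lt_succ_iff])
  rw [h1, h2]

lemma kstat_phi_zero {m : ℕ} (μ : Fin (m+1) → ℕ) : kstat (phi μ) 0 = kstat μ (Fin.last m) := by
  unfold kstat
  have h1 : {j : Fin (m+1) | j < 0 ∧ phi μ 0 < phi μ j} = ∅ := by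
    ext j; simp [Fin.not_lt_zero]
  have h2 : Set.ncard {j : Fin (m+1) | 0 < j ∧ phi μ 0 ≤ phi μ j}
      = Set.ncard {k : Fin m | μ (Fin.last m) < μ k.castSucc} :=
    ncard_succ_shift _ _ (by simp) (fun k => by
      simp [Fin.succ_pos, Nat.add_one_le_iff])
  have h3 : {j : Fin (m+1) | Fin.last m < j ∧ μ (Fin.last m) ≤ μ j} = ∅ := by
    ext j; simp [Fin.le_last j, not_lt.mpr (Fin.le_last j)]
  have h4 : Set.ncard {j : Fin (m+1) | j < Fin.last m ∧ μ (Fin.last m) < μ j}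
      = Set.ncard {k : Fin m | μ (Fin.last m) < μ k.castSucc} :=
    ncard_castSucc_shift _ _ (by simp) (fun k => by simp [Fin.castSucc_lt_last])
  rw [h1, h2, h3, h4]
  simp

lemma kstat_phi_succ {m : ℕ} (μ : Fin (m+1) → ℕ) (i : Fin m) :
    kstat (phi μ) i.succ = kstat μ i.castSucc := by
  unfold kstat
  set a := μ i.castSucc with ha
  have hphi : phi μ i.succ = a := phi_succ μ i
  by_cases hcase : a ≤ μ (Fin.last m)
  · have h1 : Set.ncard {j : Fin (m+1) | j < i.succ ∧ phi μ i.succ < phi μ j}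
        = Set.ncard {k : Fin m | k < i ∧ a < μ k.castSucc} + 1 :=
      ncard_succ_shift' _ _ (by simp [hphi, Fin.succ_pos, Nat.lt_add_one_iff, hcase])
        (fun k => by simp [hphi, Fin.succ_lt_succ_iff])
    have h2 : Set.ncard {j : Fin (m+1) | i.succ < j ∧ phi μ i.succ ≤ phi μ j}
        = Set.ncard {k : Fin m | i < k ∧ a ≤ μ k.castSucc} :=
      ncard_succ_shift _ _ (by simp [Fin.not_lt_zero]) (fun k => by
        simp [hphi, Fin.succ_lt_succ_iff])
    have h3 : Set.ncard {j : Fin (m+1) | j < i.castSucc ∧ a < μ j}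
        = Set.ncard {k : Fin m | k < i ∧ a < μ k.castSucc} :=
      ncard_castSucc_shift _ _ (by simp [not_lt.mpr (Fin.le_last _), Fin.le_last])
        (fun k => by simp [Fin.castSucc_lt_castSucc_iff])
    have h4 : Set.ncard {j : Fin (m+1) | i.castSucc < j ∧ a ≤ μ j}
        = Set.ncard {k : Fin m | i < k ∧ a ≤ μ k.castSucc} + 1 :=
      ncard_castSucc_shift' _ _ (by simp [Fin.castSucc_lt_last, hcase])
        (fun k => by simp [Fin.castSucc_lt_castSucc_iff])
    rw [h1, h2, h3, h4]
    omega
  · have h1 : Set.ncard {j : Fin (m+1) | j < i.succ ∧ phi μ i.succ < phi μ j}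
        = Set.ncard {k : Fin m | k < i ∧ a < μ k.castSucc} :=
      ncard_succ_shift _ _ (by simp [hphi, Nat.lt_add_one_iff, hcase])
        (fun k => by simp [hphi, Fin.succ_lt_succ_iff])
    have h2 : Set.ncard {j : Fin (m+1) | i.succ < j ∧ phi μ i.succ ≤ phi μ j}
        = Set.ncard {k : Fin m | i < k ∧ a ≤ μ k.castSucc} :=
      ncard_succ_shift _ _ (by simp [Fin.not_lt_zero]) (fun k => by
        simp [hphi, Fin.succ_lt_succ_iff])
    have h3 : Set.ncard {j : Fin (m+1) | j < i.castSucc ∧ a < μ j}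
        = Set.ncard {k : Fin m | k < i ∧ a < μ k.castSucc} :=
      ncard_castSucc_shift _ _ (by simp [not_lt.mpr (Fin.le_last _), Fin.le_last])
        (fun k => by simp [Fin.castSucc_lt_castSucc_iff])
    have h4 : Set.ncard {j : Fin (m+1) | i.castSucc < j ∧ a ≤ μ j}
        = Set.ncard {k : Fin m | i < k ∧ a ≤ μ k.castSucc} :=
      ncard_castSucc_shift _ _ (by simp [Fin.castSucc_lt_last, hcase])
        (fun k => by simp [Fin.castSucc_lt_castSucc_iff])
    rw [h1, h2, h3, h4]

lemma evalPt_zero_of_zero {m : ℕ} (ν : Fin (m+1) → ℕ) (h0 : ν 0 = 0) :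
    evalPt ν 0 = tt ^ (-(m : ℤ)) := by
  rw [evalPt, h0, kstat_zero_of_zero ν h0]
  simp

lemma evalPt_succ_of_zero {m : ℕ} (ν : Fin (m+1) → ℕ) (h0 : ν 0 = 0) (i : Fin m) :
    evalPt ν i.succ = evalPt (ν ∘ Fin.succ) i := by
  rw [evalPt, evalPt, kstat_succ_of_zero ν h0]
  rfl

lemma evalPt_phi_zero {m : ℕ} (μ : Fin (m+1) → ℕ) :
    evalPt (phi μ) 0 = qq * evalPt μ (Fin.last m) := by
  rw [evalPt, evalPt, kstat_phi_zero, phi_zero, pow_succ]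
  ring

lemma evalPt_phi_succ {m : ℕ} (μ : Fin (m+1) → ℕ) (i : Fin m) :
    evalPt (phi μ) i.succ = evalPt μ i.castSucc := by
  rw [evalPt, evalPt, kstat_phi_succ, phi_succ]

lemma csize_cons_zero {m : ℕ} (ν' : Fin m → ℕ) :
    csize (Fin.cases 0 ν' : Fin (m+1) → ℕ) = csize ν' := by
  unfold csize
  rw [Fin.sum_univ_succ]
  simp

lemma csize_phi {m : ℕ} (μ : Fin (m+1) → ℕ) : csize (phi μ) = csize μ + 1 := by
  unfold csize
  rw [Fin.sum_univ_succ, phi_zero]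
  simp only [phi_succ]
  rw [show (∑ i : Fin (m+1), μ i) = ∑ i : Fin m, μ i.castSucc + μ (Fin.last m) from
    Fin.sum_univ_castSucc μ]
  omega

end Kstat
section Main

lemma eval_eq_aeval {n : ℕ} (x : Fin n → K) (p : MvPolynomial (Fin n) K) :
    eval x p = aeval x p := rfl

lemma eq_C_of_totalDegree_le_zero {n : ℕ} {f : MvPolynomial (Fin n) K}
    (h : f.totalDegree ≤ 0) : f = C (coeff 0 f) := by
  ext m
  rw [coeff_C]
  by_cases hm : m ∈ f.support
  · have hz := (totalDegree_eq_zero_iff _ f).mp (Nat.le_zero.mp h) m hm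
    have : m = 0 := Finsupp.ext fun i => hz i
    simp [this.symm]
  · have h0 : coeff m f = 0 := of_not_not (mt mem_support_iff.mpr (by simpa using hm))
    rw [h0]
    split_ifs with he
    · rw [← he] at h0; exact h0.symm
    · rfl

lemma vanish : ∀ (d n : ℕ) (f : MvPolynomial (Fin n) K), f.totalDegree ≤ d →
    (∀ ν : Fin n → ℕ, csize ν ≤ d → eval (evalPt ν) f = 0) → f = 0 := by
  intro d
  induction d with
  | zero =>
    intro n f hdeg hvan
    rw [eq_C_of_totalDegree_le_zero hdeg] at hvan ⊢
    have := hvan (fun _ => 0) (by simp [csize])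
    rw [eval_C] at this
    rw [this, map_zero]
  | succ e ihd =>
    intro n
    induction n with
    | zero =>
      intro f hdeg hvan
      rw [eq_C_of_isEmpty f] at hvan ⊢
      have := hvan (fun _ => 0) (by simp [csize])
      rw [eval_C] at this
      rw [this, map_zero]
    | succ m ihn =>
      intro f hdeg hvan
      set c : K := tt ^ (-(m : ℤ)) with hc
      set ψsub : Fin (m+1) → MvPolynomial (Fin m) K := Fin.cases (C c) X with hψsub
      set g : MvPolynomial (Fin m) K := aeval ψsub f with hg
      -- step 1 : g vanishes everywhere, hence g = 0
      have hgdeg : g.totalDegree ≤ e + 1 := by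
        refine le_trans (deg_aeval_le ψsub ?_ f) hdeg
        intro i
        induction i using Fin.cases with
        | zero => simp [hψsub]
        | succ k => simp [hψsub, totalDegree_X]
      have hgvan : ∀ ν' : Fin m → ℕ, csize ν' ≤ e + 1 → eval (evalPt ν') g = 0 := by
        intro ν' hν'
        have hfun : (fun i => (aeval (evalPt ν') (ψsub i) : K))
            = evalPt (Fin.cases 0 ν' : Fin (m+1) → ℕ) := by
          funext i
          induction i using Fin.cases with
          | zero =>
            rw [evalPt_zero_of_zero _ (by simp)]
            simp [hψsub, ← hc]
          | succ k =>
            rw [evalPt_succ_of_zero _ (by simp)]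
            have : (Fin.cases 0 ν' : Fin (m+1) → ℕ) ∘ Fin.succ = ν' := by
              funext j; simp
            simp [hψsub, this]
        rw [eval_eq_aeval, hg, comp_aeval_apply, hfun, ← eval_eq_aeval]
        exact hvan _ (by rw [csize_cons_zero]; exact hν')
      have hg0 : g = 0 := ihn g hgdeg hgvan
      -- step 2 : (X 0 - C c) divides f
      have hdvd : (X 0 - C c) ∣ f := by
        have hhom : (Polynomial.evalRingHom (C c : MvPolynomial (Fin m) K)).comp
            ((finSuccEquiv K m : MvPolynomial (Fin (m+1)) K ≃+* Polynomial (MvPolynomial (Fin m) K)) :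
              MvPolynomial (Fin (m+1)) K →+* Polynomial (MvPolynomial (Fin m) K))
            = (aeval ψsub :
                MvPolynomial (Fin (m+1)) K →ₐ[K] MvPolynomial (Fin m) K).toRingHom := by
          apply MvPolynomial.ringHom_ext
          · intro a
            simp [finSuccEquiv_apply, hψsub]
          · intro i
            induction i using Fin.cases with
            | zero => simp [finSuccEquiv_apply, hψsub]
            | succ k => simp [finSuccEquiv_apply, hψsub]
        have hroot : Polynomial.eval (C c) (finSuccEquiv K m f) = 0 := by
          have := congrArg (fun φ => φ f) hhom
          simpa using this.trans hg0
        have hdvdF : (Polynomial.X - Polynomial.C (C c)) ∣ finSuccEquiv K m f :=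
          Polynomial.dvd_iff_isRoot.mpr hroot
        obtain ⟨H, hH⟩ := hdvdF
        refine ⟨(finSuccEquiv K m).symm H, ?_⟩
        apply (finSuccEquiv K m).injective
        rw [map_mul, map_sub, hH]
        simp [finSuccEquiv_apply]
      obtain ⟨h, hfh⟩ := hdvd
      -- step 3 : degree of h
      have hhdeg : h.totalDegree ≤ e := deg_cofactor (hfh ▸ hdeg)
      -- step 4 : h vanishes at ν with ν 0 ≥ 1
      have hhvan : ∀ ν : Fin (m+1) → ℕ, 1 ≤ ν 0 → csize ν ≤ e + 1 →
          eval (evalPt ν) h = 0 := by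
        intro ν hν0 hνs
        have hev := hvan ν hνs
        rw [hfh, map_mul, map_sub, eval_X, eval_C] at hev
        rcases mul_eq_zero.mp hev with hz | hz
        · exfalso
          have : evalPt ν 0 = c := sub_eq_zero.mp hz
          rw [evalPt, hc] at this
          have h2 : qq ^ ν 0 * tt ^ (-(kstat ν 0 : ℤ)) = qq ^ (0:ℕ) * tt ^ (-(m:ℤ)) := by
            rw [this]; ring
          have := (qt_pow_inj h2).1
          omega
        · exact hz
      -- step 5 : the shifted polynomial h₂ vanishes, hence h₂ = 0
      set ψ2 : Fin (m+1) → MvPolynomial (Fin (m+1)) K :=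
        Fin.cases (C qq * X (Fin.last m)) (fun i => X i.castSucc) with hψ2
      set h2 : MvPolynomial (Fin (m+1)) K := aeval ψ2 h with hh2
      have hh2deg : h2.totalDegree ≤ e := by
        refine le_trans (deg_aeval_le ψ2 ?_ h) hhdeg
        intro i
        induction i using Fin.cases with
        | zero =>
          refine le_trans (totalDegree_mul _ _) ?_
          simp [totalDegree_X]
        | succ k => simp [hψ2, totalDegree_X]
      have hh2van : ∀ μ : Fin (m+1) → ℕ, csize μ ≤ e → eval (evalPt μ) h2 = 0 := by
        intro μ hμ
        have hfun : (fun i => (aeval (evalPt μ) (ψ2 i) : K)) = evalPt (phi μ) := by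
          funext i
          induction i using Fin.cases with
          | zero =>
            rw [evalPt_phi_zero]
            simp [hψ2]
          | succ k =>
            rw [evalPt_phi_succ]
            simp [hψ2]
        rw [eval_eq_aeval, hh2, comp_aeval_apply, hfun, ← eval_eq_aeval]
        exact hhvan (phi μ) (by rw [phi_zero]; omega) (by rw [csize_phi]; omega)
      have hh20 : h2 = 0 := ihd (m+1) h2 hh2deg hh2van
      -- step 6 : invert the substitution
      set χ : Fin (m+1) → MvPolynomial (Fin (m+1)) K :=
        Fin.lastCases (C qq⁻¹ * X 0) (fun j => X j.succ) with hχ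
      have hinv : aeval χ h2 = h := by
        rw [hh2, comp_aeval_apply]
        have hfun : (fun i => aeval χ (ψ2 i)) = (X : Fin (m+1) → MvPolynomial (Fin (m+1)) K) := by
          funext i
          induction i using Fin.cases with
          | zero =>
            simp [hψ2, hχ]
            rw [← mul_assoc, ← C_mul, mul_inv_cancel₀ qq_ne_zero, C_1, one_mul]
          | succ k =>
            simp [hψ2, hχ]
        rw [hfun, aeval_X_left_apply]
      have hh0 : h = 0 := by rw [← hinv, hh20, map_zero]
      rw [hfh, hh0, mul_zero]

end Main
section Interp

lemma coe_expOf {n : ℕ} (ν : Fin n → ℕ) : ⇑(expOf ν) = ν :=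
  Finsupp.equivFunOnFinite.apply_symm_apply ν

lemma sum_eq_csize {n : ℕ} (s : Fin n →₀ ℕ) : (s.sum fun _ e => e) = csize ⇑s := by
  rw [csize, Finsupp.sum_fintype]
  intro _; rfl

set_option maxHeartbeats 2000000 in
set_option synthInstance.maxHeartbeats 1000000 in
theorem statement0' (n d : ℕ) (a : (Fin n → ℕ) → K) :
    ∃! f : MvPolynomial (Fin n) K, f.totalDegree ≤ d ∧
      ∀ ν : Fin n → ℕ, csize ν ≤ d → eval (evalPt ν) f = a ν := by
  classical
  set S : Set (Fin n →₀ ℕ) := {s | (s.sum fun _ e => e) ≤ d} with hSdef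
  haveI hfin : Finite ↥S := by
    have h1 : Finite {s : Fin n →₀ ℕ | ∀ a, s a ≤ d} :=
      ((Set.Finite.pi' fun _ ↦ Set.finite_le_nat _).preimage DFunLike.coe_injective.injOn).to_subtype
    rw [Set.finite_coe_iff] at h1 ⊢
    exact h1.subset fun s hs i ↦ (eq_or_ne (s i) 0).elim
      (fun h ↦ h.trans_le d.zero_le) fun h ↦
        (Finset.single_le_sum (fun _ _ ↦ Nat.zero_le _) <| Finsupp.mem_support_iff.mpr h).trans hs
  haveI : Fintype ↥S := Fintype.ofFinite _
  set V : Submodule K (MvPolynomial (Fin n) K) := restrictTotalDegree (Fin n) K d with hV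
  let B : Module.Basis ↥S K ↥V := basisRestrictSupport K S
  let L : ↥V →ₗ[K] (↥S → K) := LinearMap.pi fun s =>
    ((aeval (R := K) (evalPt (⇑s.1))).toLinearMap).comp V.subtype
  have hmemS : ∀ ν : Fin n → ℕ, csize ν ≤ d → expOf ν ∈ S := by
    intro ν hν
    show ((expOf ν).sum fun _ e => e) ≤ d
    rw [sum_eq_csize, coe_expOf]
    exact hν
  have hker : ∀ f : ↥V, L f = 0 → f = 0 := by
    intro f hf
    have hvan0 : ∀ ν : Fin n → ℕ, csize ν ≤ d →
        eval (evalPt ν) (f : MvPolynomial (Fin n) K) = 0 := by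
      intro ν hν
      have := congrFun hf ⟨expOf ν, hmemS ν hν⟩
      change (aeval (R := K) (evalPt ⇑(expOf ν))) (f : MvPolynomial (Fin n) K) = 0 at this
      rw [coe_expOf] at this; exact this
    have h0 : (f : MvPolynomial (Fin n) K) = 0 :=
      vanish d n f ((mem_restrictTotalDegree _ _ _).mp f.2) hvan0
    exact Subtype.ext h0
  have hLinj : Function.Injective L := by
    intro x y hxy
    have hsub : L (x - y) = L x - L y := LinearMap.map_sub L x y
    have := hker (x - y) (by rw [hsub, hxy, sub_self])
    exact sub_eq_zero.mp this
  have hfr : Module.finrank K ↥V = Module.finrank K (↥S → K) := by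
    rw [Module.finrank_eq_card_basis B, Module.finrank_pi]
  haveI : FiniteDimensional K ↥V := Module.Finite.of_basis B
  obtain ⟨f, hfeq⟩ :=
    (LinearMap.injective_iff_surjective_of_finrank_eq_finrank (K := K) (V := ↥V) (V₂ := ↥S → K) (f := L) hfr).mp hLinj
      (fun s => a ⇑s.1)
  have hfdeg : (f : MvPolynomial (Fin n) K).totalDegree ≤ d :=
    (mem_restrictTotalDegree _ _ _).mp f.2
  have hfint : ∀ ν : Fin n → ℕ, csize ν ≤ d →
      eval (evalPt ν) (f : MvPolynomial (Fin n) K) = a ν := by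
    intro ν hν
    have := congrFun hfeq ⟨expOf ν, hmemS ν hν⟩
    change (aeval (R := K) (evalPt ⇑(expOf ν))) (f : MvPolynomial (Fin n) K) = a ⇑(expOf ν) at this
    rw [coe_expOf] at this; exact this
  refine ⟨f, ⟨hfdeg, hfint⟩, ?_⟩
  rintro y ⟨hydeg, hyint⟩
  have hsubdeg : (y - (f : MvPolynomial (Fin n) K)).totalDegree ≤ d :=
    le_trans (totalDegree_sub _ _) (max_le hydeg hfdeg)
  have h0 : y - (f : MvPolynomial (Fin n) K) = 0 :=
    vanish d n _ hsubdeg (fun ν hν => by rw [map_sub, hyint ν hν, hfint ν hν, sub_self])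
  exact sub_eq_zero.mp h0

end Interp

/-- Knop–Sahi interpolation theorem. -/
theorem statement0 (n d : ℕ) (hn : 1 ≤ n) (a : (Fin n → ℕ) → K) :
    (∃! f : MvPolynomial (Fin n) K, f.totalDegree ≤ d ∧
        ∀ ν : Fin n → ℕ, csize ν ≤ d → eval (evalPt ν) f = a ν) ∧
    (∀ f : MvPolynomial (Fin n) K, f.totalDegree ≤ d →
        (∀ ν : Fin n → ℕ, csize ν ≤ d → eval (evalPt ν) f = 0) → f = 0) :=
  ⟨statement0' n d a, fun f hf hv => vanish d n f hf hv⟩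
end
end

section
/- The polynomial ring 𝒫_n decomposes as the direct sum 𝒫_n = ⊕_λ V*_λ, the sum ranging over all partitions λ with at most n parts; in particular, the interpolation nonsymmetric Macdonald polynomials {E*_μ : μ ∈ ℕ^n} form a K-basis of 𝒫_n. -/
open MvPolynomial

noncomputable section
open scoped Classical

namespace Aux

set_option maxHeartbeats 1000000
set_option synthInstance.maxHeartbeats 400000

lemma algK_inj : Function.Injective (algebraMap (MvPolynomial (Fin 2) ℚ) K) :=
  IsFractionRing.injective _ _

lemma qq_ne_zero : qq ≠ 0 := by
  intro h
  have h2 : algebraMap (MvPolynomial (Fin 2) ℚ) K (X 0) = algebraMap (MvPolynomial (Fin 2) ℚ) K 0 := by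
    rw [map_zero]; exact h
  exact X_ne_zero (R := ℚ) (0 : Fin 2) (algK_inj h2)

lemma tt_ne_zero : tt ≠ 0 := by
  intro h
  have h2 : algebraMap (MvPolynomial (Fin 2) ℚ) K (X 1) = algebraMap (MvPolynomial (Fin 2) ℚ) K 0 := by
    rw [map_zero]; exact h
  exact X_ne_zero (R := ℚ) (1 : Fin 2) (algK_inj h2)

variable {n : ℕ}

/-- `∑ ν_i κ_i`. -/
def dotc (ν κ : Fin n → ℕ) : ℕ := ∑ i, ν i * κ i

/-- `∑ k_i(ν) κ_i`. -/
def tks (ν κ : Fin n → ℕ) : ℕ := ∑ i, kstat ν i * κ i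

lemma evalPt_eq (ν : Fin n → ℕ) (i : Fin n) :
    evalPt ν i = qq ^ ν i * (tt ^ kstat ν i)⁻¹ := by
  rw [evalPt, zpow_neg, zpow_natCast]

lemma expOf_apply (κ : Fin n → ℕ) (i : Fin n) : expOf κ i = κ i := rfl

lemma expOf_coe (m : Fin n →₀ ℕ) : expOf (⇑m) = m := Finsupp.equivFunOnFinite_symm_coe m

lemma expOf_injective : Function.Injective (expOf (n := n)) :=
  Finsupp.equivFunOnFinite.symm.injective

lemma expOf_sum (κ : Fin n → ℕ) : ((expOf κ).sum fun _ e => e) = csize κ := by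
  rw [Finsupp.sum_fintype]
  · rfl
  · intro i; rfl

lemma eval_monomial_expOf (ν κ : Fin n → ℕ) :
    eval (evalPt ν) (monomial (expOf κ) (1 : K)) = qq ^ dotc ν κ * (tt ^ tks ν κ)⁻¹ := by
  rw [eval_monomial, Finsupp.prod_fintype _ _ (fun i => pow_zero _), one_mul]
  simp only [expOf_apply, evalPt_eq, mul_pow, ← pow_mul, inv_pow]
  rw [Finset.prod_mul_distrib, Finset.prod_inv_distrib,
    Finset.prod_pow_eq_pow_sum, Finset.prod_pow_eq_pow_sum]
  rfl


lemma two_mul_mul_le (a b : ℕ) : 2 * (a * b) ≤ a * a + b * b := by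
  rcases le_total a b with h | h <;> nlinarith

lemma two_mul_mul_lt {a b : ℕ} (h : a ≠ b) : 2 * (a * b) < a * a + b * b := by
  rcases h.lt_or_gt with h | h <;> nlinarith

lemma two_dotc_le (a b : Fin n → ℕ) : 2 * dotc a b ≤ dotc a a + dotc b b := by
  unfold dotc
  rw [Finset.mul_sum, ← Finset.sum_add_distrib]
  exact Finset.sum_le_sum fun i _ => two_mul_mul_le _ _

lemma two_dotc_lt {a b : Fin n → ℕ} (h : a ≠ b) : 2 * dotc a b < dotc a a + dotc b b := by
  obtain ⟨j, hj⟩ := Function.ne_iff.mp h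
  unfold dotc
  rw [Finset.mul_sum, ← Finset.sum_add_distrib]
  exact Finset.sum_lt_sum (fun i _ => two_mul_mul_le _ _)
    ⟨j, Finset.mem_univ j, two_mul_mul_lt hj⟩

lemma sum_dotc_lt {ι : Type*} [Fintype ι] (v : ι → Fin n → ℕ) (hv : Function.Injective v)
    (σ : Equiv.Perm ι) (hσ : σ ≠ 1) :
    ∑ i, dotc (v (σ i)) (v i) < ∑ i, dotc (v i) (v i) := by
  have hex : ∃ i, σ i ≠ i := by
    by_contra hc
    push_neg at hc
    exact hσ (Equiv.ext hc)
  obtain ⟨i₀, hi₀⟩ := hex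
  have key : 2 * ∑ i, dotc (v (σ i)) (v i) < 2 * ∑ i, dotc (v i) (v i) := by
    calc 2 * ∑ i, dotc (v (σ i)) (v i) = ∑ i, 2 * dotc (v (σ i)) (v i) := Finset.mul_sum _ _ _
    _ < ∑ i, (dotc (v (σ i)) (v (σ i)) + dotc (v i) (v i)) :=
        Finset.sum_lt_sum (fun i _ => two_dotc_le _ _)
          ⟨i₀, Finset.mem_univ i₀, two_dotc_lt (hv.ne hi₀)⟩
    _ = (∑ i, dotc (v (σ i)) (v (σ i))) + ∑ i, dotc (v i) (v i) := Finset.sum_add_distrib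
    _ = 2 * ∑ i, dotc (v i) (v i) := by
        rw [Equiv.sum_comp σ (fun i => dotc (v i) (v i))]; ring
  omega

lemma prod_monomial_one {ι : Type*} (s : Finset ι) (f : ι → (Fin 2 →₀ ℕ)) :
    (∏ i ∈ s, (monomial (f i) (1 : ℚ))) = monomial (∑ i ∈ s, f i) 1 := by
  classical
  induction s using Finset.induction_on with
  | empty => simp
  | insert _ _ hx ih =>
    rw [Finset.prod_insert hx, Finset.sum_insert hx, ih, monomial_mul, one_mul]

/-- The "Vandermonde" matrix of monomials evaluated at the points `ν̃`. -/
def vmat (S : Finset (Fin n → ℕ)) : Matrix {x // x ∈ S} {x // x ∈ S} K :=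
  fun ν κ => eval (evalPt ↑ν) (monomial (expOf (↑κ : Fin n → ℕ)) (1 : K))


lemma w_apply_zero (a b : ℕ) :
    (Finsupp.single (0 : Fin 2) a + Finsupp.single (1 : Fin 2) b) 0 = a := by
  rw [Finsupp.add_apply, Finsupp.single_eq_same, Finsupp.single_eq_of_ne (by decide), add_zero]

/-- exponent bookkeeping for the determinant argument -/
def wfun (B : ℕ) (ν κ : Fin n → ℕ) : Fin 2 →₀ ℕ :=
  Finsupp.single 0 (dotc ν κ) + Finsupp.single 1 (B - tks ν κ)

lemma wfun_zero (B : ℕ) (ν κ : Fin n → ℕ) : (wfun B ν κ) 0 = dotc ν κ :=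
  w_apply_zero _ _

/-- integral model of the Vandermonde matrix -/
def Nmat (S : Finset (Fin n → ℕ)) (B : ℕ) :
    Matrix {x // x ∈ S} {x // x ∈ S} (MvPolynomial (Fin 2) ℚ) :=
  fun ν κ => monomial (wfun B (↑ν : Fin n → ℕ) (↑κ : Fin n → ℕ)) 1

theorem det_Nmat_ne_zero (S : Finset (Fin n → ℕ)) (B : ℕ) : (Nmat S B).det ≠ 0 := by
  classical
  have hcoeff : coeff (∑ i : {x // x ∈ S}, wfun B (↑i : Fin n → ℕ) ↑i) (Nmat S B).det = 1 := by
    rw [Matrix.det_apply, coeff_sum]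
    rw [Finset.sum_eq_single_of_mem (1 : Equiv.Perm {x // x ∈ S}) (Finset.mem_univ _)]
    · simp only [Equiv.Perm.one_apply, Equiv.Perm.sign_one, Nmat]
      rw [prod_monomial_one, coeff_smul, coeff_monomial, if_pos rfl, one_smul]
    · intro σ _ hσ
      have hne : (∑ i : {x // x ∈ S}, wfun B (↑(σ i) : Fin n → ℕ) ↑i) ≠ ∑ i : {x // x ∈ S}, wfun B (↑i : Fin n → ℕ) ↑i := by
        intro heq
        have h0 := DFunLike.congr_fun heq (0 : Fin 2)
        rw [Finsupp.finset_sum_apply, Finsupp.finset_sum_apply] at h0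
        simp only [wfun_zero] at h0
        exact absurd h0
          (sum_dotc_lt (fun i : {x // x ∈ S} => (↑i : Fin n → ℕ))
            Subtype.coe_injective σ hσ).ne
      simp only [Nmat]
      rw [prod_monomial_one, coeff_smul, coeff_monomial, if_neg hne, smul_zero]
  intro h
  rw [h, coeff_zero] at hcoeff
  exact zero_ne_one hcoeff

theorem det_vmat_ne_zero (S : Finset (Fin n → ℕ)) : (vmat S).det ≠ 0 := by
  classical
  obtain ⟨B, hBle'⟩ := Finite.exists_le
    (fun p : {x // x ∈ S} × {x // x ∈ S} => tks (↑p.1 : Fin n → ℕ) ↑p.2)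
  have hBle : ∀ (ν κ : {x // x ∈ S}), tks (↑ν : Fin n → ℕ) ↑κ ≤ B := fun ν κ => hBle' (ν, κ)
  have hmap : (algebraMap (MvPolynomial (Fin 2) ℚ) K).mapMatrix (Nmat S B)
      = (tt ^ B) • vmat S := by
    ext ν κ
    rw [RingHom.mapMatrix_apply, Matrix.map_apply, Matrix.smul_apply]
    have hmon : (Nmat S B) ν κ =
        X 0 ^ (dotc (↑ν : Fin n → ℕ) ↑κ) * X 1 ^ (B - tks (↑ν : Fin n → ℕ) ↑κ) := by
      show (monomial (wfun B (↑ν : Fin n → ℕ) ↑κ)) 1 =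
        X 0 ^ (dotc (↑ν : Fin n → ℕ) ↑κ) * X 1 ^ (B - tks (↑ν : Fin n → ℕ) ↑κ)
      rw [wfun, X_pow_eq_monomial, X_pow_eq_monomial, monomial_mul, one_mul]
    rw [hmon, map_mul, map_pow, map_pow]
    rw [vmat, eval_monomial_expOf]
    show qq ^ _ * tt ^ (B - tks (↑ν : Fin n → ℕ) ↑κ) = _
    rw [pow_sub₀ tt tt_ne_zero (hBle ν κ), smul_eq_mul]
    ring
  intro hdet
  have h1 : algebraMap (MvPolynomial (Fin 2) ℚ) K (Nmat S B).det = 0 := by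
    rw [RingHom.map_det, hmap, Matrix.det_smul, hdet, mul_zero]
  exact det_Nmat_ne_zero S B (algK_inj (by rw [h1, map_zero]))


/-- All compositions of size at most `d`. -/
def Sd (n d : ℕ) : Finset (Fin n → ℕ) :=
  (Fintype.piFinset fun _ : Fin n => Finset.range (d + 1)).filter (fun κ => csize κ ≤ d)

lemma mem_Sd {d : ℕ} {κ : Fin n → ℕ} : κ ∈ Sd n d ↔ csize κ ≤ d := by
  constructor
  · intro h
    exact (Finset.mem_filter.mp h).2
  · intro h
    refine Finset.mem_filter.mpr ⟨Fintype.mem_piFinset.mpr fun i => ?_, h⟩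
    rw [Finset.mem_range, Nat.lt_succ_iff]
    exact le_trans (Finset.single_le_sum (fun j _ => Nat.zero_le (κ j)) (Finset.mem_univ i)) h

lemma isUnit_det_vmat (S : Finset (Fin n → ℕ)) : IsUnit (vmat S).det :=
  isUnit_iff_ne_zero.mpr (det_vmat_ne_zero S)

/-- Injectivity: a polynomial supported on monomials from `S` vanishing at all points of `S`
is zero. -/
theorem poly_eq_zero_of_vanish (S : Finset (Fin n → ℕ)) (f : MvPolynomial (Fin n) K)
    (hs : ∀ m ∈ f.support, (⇑m : Fin n → ℕ) ∈ S)
    (hv : ∀ ν ∈ S, eval (evalPt ν) f = 0) : f = 0 := by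
  classical
  set c : {x // x ∈ S} → K := fun κ => coeff (expOf ↑κ) f with hc
  have hsupp : f.support ⊆ S.image expOf := by
    intro m hm
    refine Finset.mem_image.mpr ⟨⇑m, hs m hm, expOf_coe m⟩
  have hmv : (vmat S).mulVec c = 0 := by
    funext ν
    have key : ((vmat S).mulVec c) ν = eval (evalPt ↑ν) f := by
      rw [Matrix.mulVec, dotProduct]
      calc (∑ κ : {x // x ∈ S}, vmat S ν κ * c κ)
          = ∑ κ ∈ S, eval (evalPt (↑ν : Fin n → ℕ)) (monomial (expOf κ) (coeff (expOf κ) f)) := by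
            rw [← Finset.sum_coe_sort S
              (fun κ => eval (evalPt (↑ν : Fin n → ℕ)) (monomial (expOf κ) (coeff (expOf κ) f)))]
            refine Finset.sum_congr rfl fun κ _ => ?_
            rw [vmat, hc, eval_monomial, eval_monomial, one_mul, mul_comm]
      _ = ∑ m ∈ S.image expOf, eval (evalPt (↑ν : Fin n → ℕ)) (monomial m (coeff m f)) :=
            (Finset.sum_image (g := expOf)
              (f := fun m => eval (evalPt (↑ν : Fin n → ℕ)) (monomial m (coeff m f)))
              (fun a _ b _ h => expOf_injective h)).symm
      _ = ∑ m ∈ f.support, eval (evalPt (↑ν : Fin n → ℕ)) (monomial m (coeff m f)) :=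
            (Finset.sum_subset hsupp (fun m _ hm => by
              rw [MvPolynomial.notMem_support_iff.mp hm, monomial_zero, map_zero])).symm
      _ = eval (evalPt (↑ν : Fin n → ℕ)) f := by
            rw [eval_eq]
            refine Finset.sum_congr rfl fun m _ => ?_
            rw [eval_monomial]
            rfl
    rw [key, hv ↑ν ν.2, Pi.zero_apply]
  have hc0 : c = 0 := by
    have h1 := Matrix.nonsing_inv_mul (vmat S) (isUnit_det_vmat S)
    calc c = Matrix.mulVec 1 c := (Matrix.one_mulVec c).symm
    _ = ((vmat S)⁻¹ * vmat S).mulVec c := by rw [h1]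
    _ = (vmat S)⁻¹.mulVec ((vmat S).mulVec c) := by rw [← Matrix.mulVec_mulVec]
    _ = 0 := by rw [hmv, Matrix.mulVec_zero]
  by_contra hf
  obtain ⟨m, hm⟩ := Finset.nonempty_iff_ne_empty.mpr
    (fun h => hf (MvPolynomial.support_eq_empty.mp h))
  have : c ⟨⇑m, hs m hm⟩ = coeff m f := by simp only [hc]; rw [expOf_coe]
  rw [hc0, Pi.zero_apply] at this
  exact (MvPolynomial.mem_support_iff.mp hm) this.symm

/-- Solvability of the interpolation linear system. -/
theorem exists_interp (S : Finset (Fin n → ℕ)) (y : {x // x ∈ S} → K) :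
    ∃ c : {x // x ∈ S} → K, ∀ ν : {x // x ∈ S},
      (∑ κ : {x // x ∈ S}, c κ * eval (evalPt ↑ν) (monomial (expOf (↑κ : Fin n → ℕ)) (1 : K)))
        = y ν := by
  classical
  refine ⟨(vmat S)⁻¹.mulVec y, fun ν => ?_⟩
  have h1 : (vmat S).mulVec ((vmat S)⁻¹.mulVec y) = y := by
    rw [Matrix.mulVec_mulVec, Matrix.mul_nonsing_inv _ (isUnit_det_vmat S), Matrix.one_mulVec]
  calc (∑ κ : {x // x ∈ S}, (vmat S)⁻¹.mulVec y κ * eval (evalPt ↑ν) (monomial (expOf (↑κ : Fin n → ℕ)) (1 : K)))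
      = ((vmat S).mulVec ((vmat S)⁻¹.mulVec y)) ν := by
        rw [Matrix.mulVec, dotProduct]
        exact Finset.sum_congr rfl fun κ _ => by rw [vmat, mul_comm]
  _ = y ν := by rw [h1]


theorem estar_exists (μ : Fin n → ℕ) : ∃ f, IsEstar μ f := by
  classical
  set d := csize μ with hd
  set S' : Finset (Fin n → ℕ) := (Sd n d).erase μ with hS'
  obtain ⟨c, hc⟩ := exists_interp S'
    (fun ν => - eval (evalPt ↑ν) (monomial (expOf μ) (1 : K)))
  refine ⟨monomial (expOf μ) 1 +
    ∑ κ : {x // x ∈ S'}, monomial (expOf (↑κ : Fin n → ℕ)) (c κ), ?_, ?_, ?_⟩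
  · refine le_trans (totalDegree_add _ _) (max_le ?_ ?_)
    · exact le_trans (totalDegree_monomial_le _ _) (le_of_eq (expOf_sum μ))
    · refine le_trans (totalDegree_finset_sum _ _) (Finset.sup_le fun κ _ => ?_)
      exact le_trans (totalDegree_monomial_le _ _)
        (le_trans (le_of_eq (expOf_sum _)) (mem_Sd.mp (Finset.mem_of_mem_erase κ.2)))
  · rw [coeff_add, coeff_monomial, if_pos rfl, coeff_sum]
    have hz : ∀ κ : {x // x ∈ S'}, coeff (expOf μ) (monomial (expOf (↑κ : Fin n → ℕ)) (c κ)) = 0 := by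
      intro κ
      rw [coeff_monomial, if_neg]
      intro h
      exact (Finset.ne_of_mem_erase κ.2) (expOf_injective h)
    rw [Finset.sum_congr rfl (fun κ _ => hz κ), Finset.sum_const_zero, add_zero]
  · intro ν hν hne
    have hνS : ν ∈ S' := Finset.mem_erase.mpr ⟨hne, mem_Sd.mpr hν⟩
    rw [map_add]
    have h2 : eval (evalPt ν) (∑ κ : {x // x ∈ S'}, monomial (expOf (↑κ : Fin n → ℕ)) (c κ))
        = ∑ κ : {x // x ∈ S'}, c κ * eval (evalPt ν) (monomial (expOf (↑κ : Fin n → ℕ)) (1 : K)) := by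
      rw [eval_sum]
      refine Finset.sum_congr rfl fun κ _ => ?_
      rw [eval_monomial, eval_monomial, one_mul]
    rw [h2]
    have h3 := hc ⟨ν, hνS⟩
    rw [h3]
    simp

theorem isEstar_estar (μ : Fin n → ℕ) : IsEstar μ (Estar μ) := by
  rw [Estar, dif_pos (estar_exists μ)]
  exact (estar_exists μ).choose_spec

theorem estar_self_ne_zero (μ : Fin n → ℕ) : eval (evalPt μ) (Estar μ) ≠ 0 := by
  intro h0
  have hE := isEstar_estar μ
  have hzero : Estar μ = 0 := by
    refine poly_eq_zero_of_vanish (Sd n (csize μ)) _ ?_ ?_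
    · intro m hm
      refine mem_Sd.mpr ?_
      have h1 : ((m : Fin n →₀ ℕ).sum fun _ e => e) ≤ (Estar μ).totalDegree :=
        le_totalDegree hm
      have h2 : csize (⇑m : Fin n → ℕ) = (m.sum fun _ e => e) := by
        rw [← expOf_sum (⇑m : Fin n → ℕ), expOf_coe]
      rw [h2]
      exact le_trans h1 hE.1
    · intro ν hνS
      by_cases hνμ : ν = μ
      · rw [hνμ]; exact h0
      · exact hE.2.2 ν (mem_Sd.mp hνS) hνμ
  rw [hzero] at hE
  have h1 := hE.2.1
  rw [coeff_zero] at h1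
  exact zero_ne_one h1


lemma eval_smul (x : Fin n → K) (a : K) (p : MvPolynomial (Fin n) K) :
    eval x (a • p) = a * eval x p := by
  rw [smul_eq_C_mul, eval_mul, eval_C]

/-- triangularity: coefficients of a relation among the `E*` vanish. -/
theorem coeffs_eq_zero (d : ℕ) (a : {x // x ∈ Sd n d} → K)
    (h : ∀ ν : {x // x ∈ Sd n d},
      (∑ μ : {x // x ∈ Sd n d}, a μ * eval (evalPt ↑ν) (Estar (↑μ : Fin n → ℕ))) = 0) :
    ∀ μ, a μ = 0 := by
  suffices H : ∀ s : ℕ, ∀ μ : {x // x ∈ Sd n d}, csize (↑μ : Fin n → ℕ) = s → a μ = 0 by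
    exact fun μ => H _ μ rfl
  intro s
  induction s using Nat.strong_induction_on with
  | _ s IH =>
    intro ν hν
    have h0 := h ν
    rw [Finset.sum_eq_single ν ?_ (fun hn => absurd (Finset.mem_univ ν) hn)] at h0
    · exact (mul_eq_zero.mp h0).resolve_right (estar_self_ne_zero _)
    · intro μ _ hμν
      by_cases hlt : csize (↑μ : Fin n → ℕ) < s
      · rw [IH _ hlt μ rfl, zero_mul]
      · have hle : csize (↑ν : Fin n → ℕ) ≤ csize (↑μ : Fin n → ℕ) := by omega
        have hne : (↑ν : Fin n → ℕ) ≠ ↑μ := fun hh =>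
          hμν (Subtype.coe_injective hh.symm)
        rw [(isEstar_estar (↑μ : Fin n → ℕ)).2.2 (↑ν) hle hne, mul_zero]

lemma Sd_nonempty (d : ℕ) : Nonempty {x // x ∈ Sd n d} :=
  ⟨⟨fun _ => 0, mem_Sd.mpr (by simp [csize])⟩⟩

lemma support_mem_Sd {d : ℕ} {g : MvPolynomial (Fin n) K} (hg : g.totalDegree ≤ d)
    {m : Fin n →₀ ℕ} (hm : m ∈ g.support) : (⇑m : Fin n → ℕ) ∈ Sd n d := by
  refine mem_Sd.mpr ?_
  have h1 := le_totalDegree hm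
  have h2 : csize (⇑m : Fin n → ℕ) = m.sum fun _ e => e := by
    rw [← expOf_sum (⇑m : Fin n → ℕ), expOf_coe]
  rw [h2]
  exact le_trans h1 hg

/-- every polynomial of total degree at most `d` is a combination of the `E*_μ`, `|μ| ≤ d`. -/
theorem exists_repr (d : ℕ) (f : MvPolynomial (Fin n) K) (hf : f.totalDegree ≤ d) :
    ∃ a : {x // x ∈ Sd n d} → K,
      f = ∑ μ : {x // x ∈ Sd n d}, a μ • Estar (↑μ : Fin n → ℕ) := by
  classical
  have hne := Sd_nonempty (n := n) d
  set v : {x // x ∈ Sd n d} → ({x // x ∈ Sd n d} → K) :=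
    fun μ ν => eval (evalPt ↑ν) (Estar (↑μ : Fin n → ℕ)) with hv
  have hLI : LinearIndependent K v := by
    rw [Fintype.linearIndependent_iff]
    intro g hg
    refine coeffs_eq_zero d g ?_
    intro ν
    have := congrFun hg ν
    simpa [hv] using this
  have hcard : Fintype.card {x // x ∈ Sd n d}
      = Module.finrank K ({x // x ∈ Sd n d} → K) := by
    rw [Module.finrank_pi]
  have hspan := hLI.span_eq_top_of_card_eq_finrank hcard
  have hy : (fun ν : {x // x ∈ Sd n d} => eval (evalPt ↑ν) f)
      ∈ Submodule.span K (Set.range v) := by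
    rw [hspan]; exact Submodule.mem_top
  obtain ⟨a, ha⟩ := (Submodule.mem_span_range_iff_exists_fun K).mp hy
  refine ⟨a, ?_⟩
  have hgdeg : (∑ μ : {x // x ∈ Sd n d}, a μ • Estar (↑μ : Fin n → ℕ)).totalDegree ≤ d := by
    refine le_trans (totalDegree_finset_sum _ _) (Finset.sup_le fun μ _ => ?_)
    exact le_trans (totalDegree_smul_le _ _)
      (le_trans (isEstar_estar (↑μ : Fin n → ℕ)).1 (mem_Sd.mp μ.2))
  have hdiff : f - (∑ μ : {x // x ∈ Sd n d}, a μ • Estar (↑μ : Fin n → ℕ)) = 0 := by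
    refine poly_eq_zero_of_vanish (Sd n d) _ ?_ ?_
    · intro m hm
      have hsub := MvPolynomial.support_sub (Fin n) f
        (∑ μ : {x // x ∈ Sd n d}, a μ • Estar (↑μ : Fin n → ℕ)) hm
      rw [Finset.mem_union] at hsub
      rcases hsub with h | h
      · exact support_mem_Sd hf h
      · exact support_mem_Sd hgdeg h
    · intro ν hνS
      rw [map_sub]
      have h1 : eval (evalPt ν) (∑ μ : {x // x ∈ Sd n d}, a μ • Estar (↑μ : Fin n → ℕ))
          = ∑ μ : {x // x ∈ Sd n d}, a μ * eval (evalPt ν) (Estar (↑μ : Fin n → ℕ)) := by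
        rw [eval_sum]
        exact Finset.sum_congr rfl fun μ _ => eval_smul _ _ _
      have h2 := congrFun ha ⟨ν, hνS⟩
      rw [Finset.sum_apply] at h2
      simp only [Pi.smul_apply, smul_eq_mul, hv] at h2
      rw [h1]
      rw [show (∑ μ : {x // x ∈ Sd n d}, a μ * eval (evalPt ν) (Estar (↑μ : Fin n → ℕ)))
        = eval (evalPt ν) f from h2]
      rw [sub_self]
  exact (sub_eq_zero.mp hdiff)


theorem span_estar_top :
    Submodule.span K (Set.range (fun μ : Fin n → ℕ => Estar (n := n) μ)) = ⊤ := by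
  rw [eq_top_iff]
  intro f _
  obtain ⟨a, ha⟩ := exists_repr (f.totalDegree) f le_rfl
  rw [ha]
  exact Submodule.sum_mem _ fun μ _ =>
    Submodule.smul_mem _ _ (Submodule.subset_span ⟨↑μ, rfl⟩)

theorem li_estar : LinearIndependent K (fun μ : Fin n → ℕ => Estar μ) := by
  classical
  rw [linearIndependent_iff]
  intro l hl
  set d := l.support.sup csize with hd
  have hsub : l.support ⊆ Sd n d := fun μ hμ => mem_Sd.mpr (Finset.le_sup hμ)
  ext μ
  rw [Finsupp.zero_apply]
  by_cases hμ : μ ∈ l.support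
  swap
  · exact Finsupp.notMem_support_iff.mp hμ
  have hsum : (∑ κ : {x // x ∈ Sd n d}, l ↑κ • Estar (↑κ : Fin n → ℕ)) = 0 := by
    rw [Finset.sum_coe_sort (s := Sd n d) (f := fun κ : Fin n → ℕ => l κ • Estar κ)]
    rw [← Finset.sum_subset hsub (fun κ _ hκ => by
      rw [Finsupp.notMem_support_iff.mp hκ, zero_smul])]
    rw [Finsupp.linearCombination_apply, Finsupp.sum] at hl
    exact hl
  have key : ∀ κ : {x // x ∈ Sd n d}, l ↑κ = 0 := by
    refine coeffs_eq_zero (n := n) d (fun κ => l ↑κ) ?_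
    intro ν
    have := congrArg (eval (evalPt (↑ν : Fin n → ℕ))) hsum
    rw [map_zero, eval_sum] at this
    rw [← this]
    exact Finset.sum_congr rfl fun κ _ => (eval_smul _ _ _).symm
  exact key ⟨μ, hsub hμ⟩

lemma csize_permAct (σ : Equiv.Perm (Fin n)) (l : Fin n → ℕ) :
    csize (permAct σ l) = csize l :=
  Equiv.sum_comp σ.symm l

lemma csize_mem_Sn {l μ : Fin n → ℕ} (h : μ ∈ Sn l) : csize μ = csize l := by
  obtain ⟨σ, rfl⟩ := h
  exact csize_permAct σ l

lemma aeval_eq_eval' (x : Fin n → K) (f : MvPolynomial (Fin n) K) :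
    aeval (R := K) x f = eval x f := by
  rw [aeval_def, eval]
  rw [show algebraMap K K = RingHom.id K from rfl]
  rfl

lemma mem_Vstar_iff (l : Fin n → ℕ) (f : MvPolynomial (Fin n) K) :
    f ∈ Vstar l ↔ f.totalDegree ≤ csize l ∧
      ∀ ν : Fin n → ℕ, csize ν ≤ csize l → ν ∉ Sn l → eval (evalPt ν) f = 0 := by
  rw [Vstar, Submodule.mem_inf, mem_restrictTotalDegree]
  constructor
  · rintro ⟨h1, h2⟩
    refine ⟨h1, fun ν hν hνSn => ?_⟩
    have h3 := (Submodule.mem_iInf _).mp h2 ν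
    have h4 := (Submodule.mem_iInf _).mp h3 ⟨hν, hνSn⟩
    have h5 := LinearMap.mem_ker.mp h4
    rw [AlgHom.toLinearMap_apply, aeval_eq_eval'] at h5
    exact h5
  · rintro ⟨h1, h2⟩
    refine ⟨h1, (Submodule.mem_iInf _).mpr fun ν => (Submodule.mem_iInf _).mpr fun hν => ?_⟩
    rw [LinearMap.mem_ker, AlgHom.toLinearMap_apply, aeval_eq_eval']
    exact h2 ν hν.1 hν.2

theorem vstar_eq (l : Fin n → ℕ) :
    Vstar l = Submodule.span K ((fun μ : Fin n → ℕ => Estar μ) '' Sn l) := by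
  refine le_antisymm ?_ ?_
  · intro f hf
    obtain ⟨hdeg, hker⟩ := (mem_Vstar_iff l f).mp hf
    obtain ⟨a, ha⟩ := exists_repr (csize l) f hdeg
    have heval : ∀ x : Fin n → K, eval x f
        = ∑ μ : {x // x ∈ Sd n (csize l)}, a μ * eval x (Estar (↑μ : Fin n → ℕ)) := by
      intro x
      rw [ha, eval_sum]
      exact Finset.sum_congr rfl fun μ _ => eval_smul _ _ _
    have hz : ∀ s : ℕ, ∀ ν : {x // x ∈ Sd n (csize l)},
        csize (↑ν : Fin n → ℕ) = s → (↑ν : Fin n → ℕ) ∉ Sn l → a ν = 0 := by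
      intro s
      induction s using Nat.strong_induction_on with
      | _ s IH =>
        intro ν hs hν
        have h0 : (∑ μ : {x // x ∈ Sd n (csize l)},
            a μ * eval (evalPt (↑ν : Fin n → ℕ)) (Estar (↑μ : Fin n → ℕ))) = 0 := by
          rw [← heval]
          exact hker ↑ν (mem_Sd.mp ν.2) hν
        rw [Finset.sum_eq_single ν ?_ (fun hn => absurd (Finset.mem_univ ν) hn)] at h0
        · exact (mul_eq_zero.mp h0).resolve_right (estar_self_ne_zero _)
        · intro μ _ hμν
          by_cases hlt : csize (↑μ : Fin n → ℕ) < s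
          · have hμSn : (↑μ : Fin n → ℕ) ∉ Sn l := by
              intro hmem
              have := csize_mem_Sn hmem
              have hsle : s ≤ csize l := hs ▸ mem_Sd.mp ν.2
              omega
            rw [IH _ hlt μ rfl hμSn, zero_mul]
          · have hle : csize (↑ν : Fin n → ℕ) ≤ csize (↑μ : Fin n → ℕ) := by omega
            have hne : (↑ν : Fin n → ℕ) ≠ ↑μ := fun hh =>
              hμν (Subtype.coe_injective hh.symm)
            rw [(isEstar_estar (↑μ : Fin n → ℕ)).2.2 (↑ν) hle hne, mul_zero]
    rw [ha]
    refine Submodule.sum_mem _ fun μ _ => ?_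
    by_cases hμ : (↑μ : Fin n → ℕ) ∈ Sn l
    · exact Submodule.smul_mem _ _ (Submodule.subset_span ⟨↑μ, hμ, rfl⟩)
    · rw [hz (csize (↑μ : Fin n → ℕ)) μ rfl hμ, zero_smul]
      exact Submodule.zero_mem _
  · rw [Submodule.span_le]
    rintro _ ⟨μ, hμ, rfl⟩
    have hcs : csize μ = csize l := csize_mem_Sn hμ
    refine (mem_Vstar_iff l _).mpr ⟨le_trans (isEstar_estar μ).1 (le_of_eq hcs), ?_⟩
    intro ν hν hνSn
    refine (isEstar_estar μ).2.2 ν (le_trans hν (le_of_eq hcs.symm)) ?_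
    intro hh
    exact hνSn (hh ▸ hμ)


lemma permAct_one (l : Fin n → ℕ) : permAct 1 l = l := rfl

lemma permAct_permAct (σ τ : Equiv.Perm (Fin n)) (l : Fin n → ℕ) :
    permAct σ (permAct τ l) = permAct (σ * τ) l := rfl

lemma mem_Sn_self (l : Fin n → ℕ) : l ∈ Sn l := ⟨1, permAct_one l⟩

lemma mem_Sn_of_mem_mem {a b μ : Fin n → ℕ} (ha : μ ∈ Sn a) (hb : μ ∈ Sn b) : a ∈ Sn b := by
  obtain ⟨σ, hσ⟩ := ha
  obtain ⟨τ, hτ⟩ := hb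
  refine ⟨σ⁻¹ * τ, ?_⟩
  rw [← permAct_permAct, hτ, ← hσ, permAct_permAct, inv_mul_cancel, permAct_one]

lemma partition_unique {l₁ l₂ : Fin n → ℕ} (h1 : IsPartition l₁) (h2 : IsPartition l₂)
    (h : l₂ ∈ Sn l₁) : l₁ = l₂ := by
  obtain ⟨σ, rfl⟩ := h
  have m1 : Monotone (l₁ ∘ ⇑(Fin.revPerm : Equiv.Perm (Fin n))) := by
    intro i j hij
    exact h1 (Fin.rev j) (Fin.rev i) (Fin.rev_le_rev.mpr hij)
  have m2 : Monotone (l₁ ∘ ⇑((Fin.revPerm : Equiv.Perm (Fin n)).trans σ.symm)) := by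
    intro i j hij
    exact h2 (Fin.rev j) (Fin.rev i) (Fin.rev_le_rev.mpr hij)
  have hu := Tuple.unique_monotone m2 m1
  funext i
  have h3 := congrFun hu (Fin.rev i)
  show l₁ i = l₁ (σ.symm i)
  simp only [Function.comp_apply, Equiv.coe_trans, Fin.revPerm_apply, Fin.rev_rev] at h3
  exact h3.symm

theorem exists_sorted (μ : Fin n → ℕ) : ∃ l : Fin n → ℕ, IsPartition l ∧ μ ∈ Sn l := by
  classical
  set π : Equiv.Perm (Fin n) := (Fin.revPerm : Equiv.Perm (Fin n)).trans (Tuple.sort μ) with hπ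
  refine ⟨μ ∘ ⇑π, ?_, ⟨π, ?_⟩⟩
  · intro i j hij
    exact Tuple.monotone_sort μ (Fin.rev_le_rev.mpr hij)
  · funext i
    show (μ ∘ ⇑π) (π.symm i) = μ i
    rw [Function.comp_apply, Equiv.apply_symm_apply]

end Aux

/-- `𝒫_n = ⊕_λ V*_λ`, and the `E*_μ` form a basis of `𝒫_n`. -/
theorem statement1 (n : ℕ) (hn : 1 ≤ n) :
    DirectSum.IsInternal (fun l : {l : Fin n → ℕ // IsPartition l} => Vstar l.1) ∧
    LinearIndependent K (fun μ : Fin n → ℕ => Estar μ) ∧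
    Submodule.span K (Set.range (fun μ : Fin n → ℕ => Estar (n := n) μ)) = ⊤ := by
  classical
  have hLI := Aux.li_estar (n := n)
  have hspan := Aux.span_estar_top (n := n)
  refine ⟨?_, hLI, hspan⟩
  rw [DirectSum.isInternal_submodule_iff_iSupIndep_and_iSup_eq_top]
  constructor
  · set b : Module.Basis (Fin n → ℕ) K (MvPolynomial (Fin n) K) :=
      Module.Basis.mk hLI (le_of_eq hspan.symm) with hb
    have himg : ∀ (l' : Fin n → ℕ),
        ((fun μ : Fin n → ℕ => Estar μ) '' Sn l') = ⇑b '' Sn l' := by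
      intro l'
      rw [hb, Module.Basis.coe_mk]
    rw [iSupIndep_def]
    intro l
    rw [Submodule.disjoint_def]
    intro f hfl hfr
    have hl' : ↑(b.repr f).support ⊆ Sn l.1 := by
      rw [← Module.Basis.mem_span_image, ← himg, ← Aux.vstar_eq]
      exact hfl
    have hr' : ↑(b.repr f).support ⊆
        ⋃ (l' : {l : Fin n → ℕ // IsPartition l}) (_ : l' ≠ l), Sn l'.1 := by
      rw [← Module.Basis.mem_span_image]
      have hle : (⨆ (j : {l : Fin n → ℕ // IsPartition l}) (_ : j ≠ l), Vstar j.1)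
          ≤ Submodule.span K
            (⇑b '' ⋃ (l' : {l : Fin n → ℕ // IsPartition l}) (_ : l' ≠ l), Sn l'.1) := by
        refine iSup_le fun j => iSup_le fun hj => ?_
        rw [Aux.vstar_eq, himg]
        exact Submodule.span_mono (Set.image_mono
          (Set.subset_iUnion₂ (s := fun (l' : {l : Fin n → ℕ // IsPartition l}) _ => Sn l'.1) j hj))
      exact hle hfr
    have hempty : (b.repr f).support = ∅ := by
      rw [Finset.eq_empty_iff_forall_notMem]
      intro μ hμ
      have h1 : μ ∈ Sn l.1 := hl' hμ
      have h2 := hr' hμ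
      rw [Set.mem_iUnion] at h2
      obtain ⟨j, h2⟩ := h2
      rw [Set.mem_iUnion] at h2
      obtain ⟨hj, h2⟩ := h2
      have h3 : l.1 ∈ Sn j.1 := Aux.mem_Sn_of_mem_mem h1 h2
      exact hj (Subtype.ext (Aux.partition_unique j.2 l.2 h3))
    have h0 : b.repr f = 0 := Finsupp.support_eq_empty.mp hempty
    exact (LinearEquiv.map_eq_zero_iff b.repr).mp h0
  · rw [eq_top_iff, ← hspan, Submodule.span_le]
    rintro _ ⟨μ, rfl⟩
    obtain ⟨l, hl, hμ⟩ := Aux.exists_sorted μ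
    have hmem : Estar μ ∈ Vstar l := by
      rw [Aux.vstar_eq]
      exact Submodule.subset_span ⟨μ, hμ, rfl⟩
    exact Submodule.mem_iSup_of_mem ⟨l, hl⟩ hmem
end
end

section
/- For each partition λ = (λ_1 ≥ ⋯ ≥ λ_n ≥ 0) there exists a unique symmetric polynomial P*_λ ∈ K[x_1,…,x_n] of total degree at most |λ| such that the coefficient of the monomial x^λ = x_1^{λ_1}⋯x_n^{λ_n} in P*_λ equals 1 and P*_λ(ν̃) = 0 for every partition ν ≠ λ with |ν| ≤ |λ|. -/
open MvPolynomial

noncomputable section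
open scoped Classical

namespace Stmt2Aux

abbrev FF : Type := RatFunc (RatFunc ℚ)

def innerHom : MvPolynomial (Fin 1) ℚ →+* Polynomial ℚ :=
  (Polynomial.mapRingHom (MvPolynomial.isEmptyRingEquiv ℚ (Fin 0)).toRingHom).comp
    (MvPolynomial.finSuccEquiv ℚ 0).toRingEquiv.toRingHom

def gHom : MvPolynomial (Fin 2) ℚ →+* FF :=
  (algebraMap (Polynomial (RatFunc ℚ)) FF).comp
    ((Polynomial.mapRingHom ((algebraMap (Polynomial ℚ) (RatFunc ℚ)).comp innerHom)).comp
      (MvPolynomial.finSuccEquiv ℚ 1).toRingEquiv.toRingHom)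

lemma innerHom_injective : Function.Injective innerHom := by
  rw [innerHom, RingHom.coe_comp]
  exact (Polynomial.map_injective _ (RingEquiv.injective _)).comp
    (fun a b h => by exact (MvPolynomial.finSuccEquiv ℚ 0).injective h)

lemma gHom_injective : Function.Injective gHom := by
  have h2 : Function.Injective ⇑((algebraMap (Polynomial ℚ) (RatFunc ℚ)).comp innerHom) := by
    rw [RingHom.coe_comp]
    exact (IsFractionRing.injective _ _).comp innerHom_injective
  rw [gHom, RingHom.coe_comp, RingHom.coe_comp]
  exact (IsFractionRing.injective _ _).comp ((Polynomial.map_injective _ h2).comp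
    (fun a b h => by exact (MvPolynomial.finSuccEquiv ℚ 1).injective h))

lemma gHom_X0 : gHom (X 0) = RatFunc.X := by
  rw [gHom]
  simp only [RingHom.comp_apply, Polynomial.coe_mapRingHom]
  rw [show (MvPolynomial.finSuccEquiv ℚ 1).toRingEquiv.toRingHom (X 0) = Polynomial.X from
    MvPolynomial.finSuccEquiv_X_zero]
  rw [Polynomial.map_X]
  exact RatFunc.algebraMap_X (K := RatFunc ℚ)

lemma gHom_X1 : gHom (X 1) = RatFunc.C (K := RatFunc ℚ) RatFunc.X := by
  have h1 : (1 : Fin 2) = Fin.succ 0 := rfl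
  rw [gHom]
  simp only [RingHom.comp_apply, Polynomial.coe_mapRingHom]
  rw [show (MvPolynomial.finSuccEquiv ℚ 1).toRingEquiv.toRingHom (X 1) = Polynomial.C (X 0) by
    rw [h1]; exact MvPolynomial.finSuccEquiv_X_succ]
  rw [Polynomial.map_C, RatFunc.algebraMap_C]
  congr 1
  simp only [RingHom.comp_apply]
  rw [show innerHom (X 0) = Polynomial.X by
    rw [innerHom]
    simp only [RingHom.comp_apply]
    rw [show (MvPolynomial.finSuccEquiv ℚ 0).toRingEquiv.toRingHom (X 0) = Polynomial.X from
      MvPolynomial.finSuccEquiv_X_zero]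
    simp only [Polynomial.coe_mapRingHom]
    exact Polynomial.map_X _]
  exact RatFunc.algebraMap_X (K := ℚ)

def phi : K →+* FF := IsFractionRing.lift gHom_injective

lemma phi_qq : phi qq = RatFunc.X := by
  rw [qq, phi, IsFractionRing.lift_algebraMap, gHom_X0]

lemma phi_tt : phi tt = RatFunc.C (K := RatFunc ℚ) RatFunc.X := by
  rw [tt, phi, IsFractionRing.lift_algebraMap, gHom_X1]

lemma phi_injective : Function.Injective phi := phi.injective

lemma phi_ne_zero {x : K} (hx : x ≠ 0) : phi x ≠ 0 := by
  intro h; exact hx (phi_injective (by rw [h, phi.map_zero]))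

def ideg (x : K) : ℤ := (phi x).intDegree

lemma ideg_mul {x y : K} (hx : x ≠ 0) (hy : y ≠ 0) : ideg (x * y) = ideg x + ideg y := by
  rw [ideg, phi.map_mul]; exact RatFunc.intDegree_mul (phi_ne_zero hx) (phi_ne_zero hy)

lemma qq_ne_zero : (qq : K) ≠ 0 := by
  intro h
  have h2 := phi_qq
  rw [h, phi.map_zero] at h2
  exact RatFunc.X_ne_zero h2.symm

lemma tt_ne_zero : (tt : K) ≠ 0 := by
  intro h
  have h2 := phi_tt
  rw [h, phi.map_zero] at h2
  have hC : (RatFunc.C (K := RatFunc ℚ) RatFunc.X : FF) ≠ 0 := by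
    rw [← RatFunc.algebraMap_C]
    exact RatFunc.algebraMap_ne_zero (Polynomial.C_ne_zero.mpr RatFunc.X_ne_zero)
  exact hC h2.symm

lemma ideg_qq : ideg qq = 1 := by rw [ideg, phi_qq, RatFunc.intDegree_X]

lemma ideg_tt : ideg tt = 0 := by rw [ideg, phi_tt, RatFunc.intDegree_C]

lemma ideg_one : ideg (1 : K) = 0 := by rw [ideg, phi.map_one, RatFunc.intDegree_one]

lemma ideg_neg (x : K) : ideg (-x) = ideg x := by
  rw [ideg, phi.map_neg, RatFunc.intDegree_neg, ideg]

lemma ideg_pow {x : K} (hx : x ≠ 0) (k : ℕ) : ideg (x ^ k) = k * ideg x := by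
  induction k with
  | zero => simpa using ideg_one
  | succ m ih =>
    rw [pow_succ, ideg_mul (pow_ne_zero _ hx) hx, ih, Nat.cast_succ, add_one_mul]

lemma ideg_inv {x : K} (hx : x ≠ 0) : ideg x⁻¹ = -ideg x := by
  have h := ideg_mul hx (inv_ne_zero hx)
  rw [mul_inv_cancel₀ hx, ideg_one] at h
  omega

lemma ideg_zpow {x : K} (hx : x ≠ 0) (z : ℤ) : ideg (x ^ z) = z * ideg x := by
  cases z with
  | ofNat m => rw [Int.ofNat_eq_coe, zpow_natCast, ideg_pow hx]
  | negSucc m =>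
    rw [zpow_negSucc, ideg_inv (pow_ne_zero _ hx), ideg_pow hx, Int.negSucc_eq]
    push_cast
    ring

lemma ideg_add_le {x y : K} (hy : y ≠ 0) (hxy : x + y ≠ 0) :
    ideg (x + y) ≤ max (ideg x) (ideg y) := by
  rw [ideg, phi.map_add]
  exact RatFunc.intDegree_add_le (phi_ne_zero hy) (by rw [← phi.map_add]; exact phi_ne_zero hxy)

lemma ideg_prod {ι : Type*} (s : Finset ι) (f : ι → K) (hf : ∀ i ∈ s, f i ≠ 0) :
    ideg (∏ i ∈ s, f i) = ∑ i ∈ s, ideg (f i) := by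
  classical
  induction s using Finset.induction with
  | empty => simpa using ideg_one
  | @insert a s ha ih =>
    rw [Finset.prod_insert ha, Finset.sum_insert ha,
      ideg_mul (hf a (Finset.mem_insert_self a s))
        (Finset.prod_ne_zero_iff.mpr fun i hi => hf i (Finset.mem_insert_of_mem hi)),
      ih fun i hi => hf i (Finset.mem_insert_of_mem hi)]

lemma ideg_sum_lt {ι : Type*} (s : Finset ι) (f : ι → K) (b : ℤ)
    (h : ∀ i ∈ s, f i ≠ 0 ∧ ideg (f i) < b) :
    (∑ i ∈ s, f i) = 0 ∨ ((∑ i ∈ s, f i) ≠ 0 ∧ ideg (∑ i ∈ s, f i) < b) := by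
  classical
  induction s using Finset.induction with
  | empty => left; simp
  | @insert a s ha ih =>
    rw [Finset.sum_insert ha]
    obtain ⟨hane, halt⟩ := h a (Finset.mem_insert_self a s)
    rcases ih (fun i hi => h i (Finset.mem_insert_of_mem hi)) with h0 | ⟨hne, hlt⟩
    · rw [h0, add_zero]; right; exact ⟨hane, halt⟩
    · by_cases htot : f a + ∑ i ∈ s, f i = 0
      · left; exact htot
      · right
        exact ⟨htot, lt_of_le_of_lt (ideg_add_le hne htot) (max_lt halt hlt)⟩

end Stmt2Aux

namespace Stmt2Aux

def zdot {n : ℕ} (a b : Fin n → ℕ) : ℤ := ∑ i, (a i : ℤ) * b i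

lemma zdot_key {n : ℕ} {a b : Fin n → ℕ} (h : a ≠ b) :
    2 * zdot a b + 1 ≤ zdot a a + zdot b b := by
  have key : ∀ i, 2 * ((a i : ℤ) * b i) ≤ (a i : ℤ) * a i + (b i : ℤ) * b i := fun i => by
    nlinarith [sq_nonneg ((a i : ℤ) - b i)]
  obtain ⟨i0, hi0⟩ := Function.ne_iff.mp h
  have keystrict : 2 * ((a i0 : ℤ) * b i0) < (a i0 : ℤ) * a i0 + (b i0 : ℤ) * b i0 := by
    have hne : (a i0 : ℤ) - b i0 ≠ 0 := sub_ne_zero.mpr (by exact_mod_cast hi0)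
    have h1 : (1 : ℤ) ≤ |(a i0 : ℤ) - b i0| := Int.one_le_abs hne
    nlinarith [sq_abs ((a i0 : ℤ) - b i0)]
  have hsum := Finset.sum_lt_sum (s := Finset.univ)
    (f := fun i => 2 * ((a i : ℤ) * b i)) (g := fun i => (a i : ℤ) * a i + (b i : ℤ) * b i)
    (fun i _ => key i) ⟨i0, Finset.mem_univ _, keystrict⟩
  rw [← Finset.mul_sum, Finset.sum_add_distrib] at hsum
  rw [zdot, zdot, zdot]
  omega

lemma zdot_perm {n : ℕ} (a : Fin n → ℕ) (π : Equiv.Perm (Fin n)) :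
    zdot (a ∘ ⇑π) (a ∘ ⇑π) = zdot a a :=
  Equiv.sum_comp π (fun i => (a i : ℤ) * a i)

lemma csize_perm {n : ℕ} (a : Fin n → ℕ) (π : Equiv.Perm (Fin n)) :
    csize (a ∘ ⇑π) = csize a :=
  Equiv.sum_comp π a

def mySort {n : ℕ} (b : Fin n → ℕ) : Fin n → ℕ := fun i => b (Tuple.sort b (Fin.rev i))

lemma mySort_eq_comp {n : ℕ} (b : Fin n → ℕ) :
    mySort b = b ∘ ⇑(Fin.revPerm.trans (Tuple.sort b)) := rfl

lemma mySort_partition {n : ℕ} (b : Fin n → ℕ) : IsPartition (mySort b) := by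
  intro i j hij
  exact Tuple.monotone_sort b (Fin.rev_le_rev.mpr hij)

lemma partition_unique {n : ℕ} {a : Fin n → ℕ} (ha : IsPartition a) (π : Equiv.Perm (Fin n))
    (hb : IsPartition (a ∘ ⇑π)) : a ∘ ⇑π = a := by
  have h1 : Monotone (a ∘ ⇑(Fin.revPerm.trans π)) := by
    intro i j hij
    exact hb (Fin.rev j) (Fin.rev i) (Fin.rev_le_rev.mpr hij)
  have h2 : Monotone (a ∘ ⇑(Fin.revPerm : Equiv.Perm (Fin n))) := by
    intro i j hij
    exact ha (Fin.rev j) (Fin.rev i) (Fin.rev_le_rev.mpr hij)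
  have h3 := Tuple.unique_monotone h1 h2
  funext j
  have h4 := congrFun h3 (Fin.rev j)
  simpa [Function.comp, Fin.rev_rev] using h4

lemma coe_expOf {n : ℕ} (ν : Fin n → ℕ) : ⇑(expOf ν) = ν := by
  funext i; rfl

lemma coeff_comp_perm {n : ℕ} {f : MvPolynomial (Fin n) K} (hsym : f.IsSymmetric)
    (β : Fin n →₀ ℕ) (π : Equiv.Perm (Fin n)) :
    coeff (expOf (⇑β ∘ ⇑π)) f = coeff β f := by
  have hmap : expOf (⇑β ∘ ⇑π) = Finsupp.mapDomain ⇑π.symm β := by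
    apply Finsupp.ext; intro a
    rw [Finsupp.mapDomain_equiv_apply (f := π.symm)]
    have : (expOf (⇑β ∘ ⇑π)) a = β (π a) := by rw [coe_expOf]; rfl
    rw [this]
    simp
  rw [hmap]
  conv_lhs => rw [← hsym π.symm]
  exact MvPolynomial.coeff_rename_mapDomain _ (Equiv.injective _) f β

lemma csize_coe_le {n : ℕ} {f : MvPolynomial (Fin n) K} {β : Fin n →₀ ℕ}
    (hβ : β ∈ f.support) : csize ⇑β ≤ f.totalDegree := by
  have h := MvPolynomial.le_totalDegree hβ
  rwa [Finsupp.sum_fintype _ _ (fun _ => rfl)] at h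

lemma core {n : ℕ} {dd : ℕ} {f : MvPolynomial (Fin n) K} (hf : f ≠ 0) (hsym : f.IsSymmetric)
    (hdeg : f.totalDegree ≤ dd) :
    ∃ μ : Fin n → ℕ, IsPartition μ ∧ csize μ ≤ dd ∧ coeff (expOf μ) f ≠ 0 ∧
      eval (evalPt μ) f ≠ 0 := by
  classical
  set T : Finset (Fin n → ℕ) := f.support.image (fun β : Fin n →₀ ℕ => mySort ⇑β) with hT
  have hTne : T.Nonempty := (MvPolynomial.support_nonempty.mpr hf).image _
  have hcoeffT : ∀ μ ∈ T, coeff (expOf μ) f ≠ 0 ∧ IsPartition μ ∧ csize μ ≤ dd := by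
    intro μ hμ
    obtain ⟨β, hβ, hβμ⟩ := Finset.mem_image.mp hμ
    have hco : coeff (expOf μ) f = coeff β f := by
      rw [← hβμ, mySort_eq_comp]; exact coeff_comp_perm hsym β _
    refine ⟨by rw [hco]; exact MvPolynomial.mem_support_iff.mp hβ,
      by rw [← hβμ]; exact mySort_partition _, ?_⟩
    rw [← hβμ, mySort_eq_comp, csize_perm]
    exact le_trans (csize_coe_le hβ) hdeg
  obtain ⟨μs, hμsT, hmax⟩ := Finset.exists_max_image T
    (fun μ => 2 * ideg (coeff (expOf μ) f) + zdot μ μ) hTne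
  obtain ⟨hcs, hps, hszs⟩ := hcoeffT μs hμsT
  refine ⟨μs, hps, hszs, hcs, ?_⟩
  set pt := evalPt μs with hpt
  have hptne : ∀ i, pt i ≠ 0 := fun i =>
    mul_ne_zero (pow_ne_zero _ qq_ne_zero) (zpow_ne_zero _ tt_ne_zero)
  have hptideg : ∀ i, ideg (pt i) = (μs i : ℤ) := by
    intro i
    rw [show pt i = qq ^ μs i * tt ^ (-(kstat μs i : ℤ)) from rfl,
        ideg_mul (pow_ne_zero _ qq_ne_zero) (zpow_ne_zero _ tt_ne_zero),
        ideg_pow qq_ne_zero, ideg_qq, ideg_zpow tt_ne_zero, ideg_tt]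
    ring
  set term : (Fin n →₀ ℕ) → K := fun d => coeff d f * ∏ i, pt i ^ d i with hterm
  have htermne : ∀ d ∈ f.support, term d ≠ 0 := fun d hd =>
    mul_ne_zero (MvPolynomial.mem_support_iff.mp hd)
      (Finset.prod_ne_zero_iff.mpr fun i _ => pow_ne_zero _ (hptne i))
  have htermideg : ∀ d ∈ f.support, ideg (term d) = ideg (coeff d f) + zdot ⇑d μs := by
    intro d hd
    rw [hterm]
    rw [ideg_mul (MvPolynomial.mem_support_iff.mp hd)
        (Finset.prod_ne_zero_iff.mpr fun i _ => pow_ne_zero _ (hptne i)),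
      ideg_prod _ _ (fun i _ => pow_ne_zero _ (hptne i))]
    congr 1
    rw [zdot]
    apply Finset.sum_congr rfl
    intro i _
    rw [ideg_pow (hptne i), hptideg i]
  set d0 := expOf μs with hd0
  have hd0supp : d0 ∈ f.support := MvPolynomial.mem_support_iff.mpr hcs
  set b := ideg (coeff d0 f) + zdot μs μs with hb
  have hmain : ideg (term d0) = b := by
    rw [htermideg d0 hd0supp, hb, hd0, coe_expOf]
  have hrest : ∀ d ∈ f.support.erase d0, term d ≠ 0 ∧ ideg (term d) < b := by
    intro d hd
    obtain ⟨hdne, hdsupp⟩ := Finset.mem_erase.mp hd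
    refine ⟨htermne d hdsupp, ?_⟩
    have hμT : mySort ⇑d ∈ T := by rw [hT]; exact Finset.mem_image_of_mem _ hdsupp
    have hcμ : coeff (expOf (mySort ⇑d)) f = coeff d f := by
      rw [mySort_eq_comp]; exact coeff_comp_perm hsym d _
    have hdne' : ⇑d ≠ μs := by
      intro h
      apply hdne
      have h2 : d = expOf ⇑d := (Finsupp.equivFunOnFinite_symm_coe d).symm
      rw [hd0, h2, h]
    have hkey := zdot_key hdne'
    have hperm : zdot ⇑d ⇑d = zdot (mySort ⇑d) (mySort ⇑d) := by
      rw [mySort_eq_comp, zdot_perm]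
    have hW := hmax (mySort ⇑d) hμT
    rw [hcμ] at hW
    rw [htermideg d hdsupp, hb]
    omega
  have hsplit : eval pt f = term d0 + ∑ d ∈ f.support.erase d0, term d := by
    rw [MvPolynomial.eval_eq']
    exact (Finset.add_sum_erase _ term hd0supp).symm
  intro hzero
  rw [hsplit] at hzero
  rcases ideg_sum_lt _ term b hrest with h0 | ⟨hne, hlt⟩
  · rw [h0, add_zero] at hzero; exact htermne d0 hd0supp hzero
  · have h1 : term d0 = -∑ d ∈ f.support.erase d0, term d := eq_neg_of_add_eq_zero_left hzero
    have h2 : ideg (term d0) = ideg (∑ d ∈ f.support.erase d0, term d) := by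
      rw [h1, ideg_neg]
    omega

end Stmt2Aux

namespace Stmt2Aux

def msymm {n : ℕ} (μ : Fin n → ℕ) : MvPolynomial (Fin n) K :=
  ∑ σ : Equiv.Perm (Fin n), monomial (expOf (μ ∘ ⇑σ)) (1 : K)

lemma expOf_comp_perm {n : ℕ} (μ : Fin n → ℕ) (σ τ : Equiv.Perm (Fin n)) :
    Finsupp.mapDomain ⇑τ (expOf (μ ∘ ⇑σ)) = expOf (μ ∘ ⇑(τ.symm.trans σ)) := by
  apply Finsupp.ext; intro a
  rw [Finsupp.mapDomain_equiv_apply (f := τ)]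
  rfl

lemma msymm_symmetric {n : ℕ} (μ : Fin n → ℕ) : (msymm μ).IsSymmetric := by
  intro τ
  simp only [msymm]
  rw [map_sum]
  rw [Finset.sum_congr rfl (fun σ _ => by
    rw [MvPolynomial.rename_monomial, expOf_comp_perm])]
  exact Equiv.sum_comp (Equiv.mulRight τ.symm)
    (fun σ => monomial (expOf (μ ∘ ⇑σ)) (1 : K))

lemma coeff_msymm {n : ℕ} (μ ν : Fin n → ℕ) :
    coeff (expOf ν) (msymm μ) =
      ((Finset.univ.filter (fun σ : Equiv.Perm (Fin n) => μ ∘ ⇑σ = ν)).card : K) := by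
  classical
  simp only [msymm]
  rw [MvPolynomial.coeff_sum, Finset.card_filter, Nat.cast_sum]
  apply Finset.sum_congr rfl
  intro σ _
  have hiff : (expOf (μ ∘ ⇑σ) = expOf ν) ↔ (μ ∘ ⇑σ = ν) :=
    ⟨fun h => Finsupp.equivFunOnFinite.symm.injective h, fun h => by rw [h]⟩
  rw [MvPolynomial.coeff_monomial, if_congr hiff rfl rfl]
  split_ifs <;> simp

lemma coeff_msymm_ne {n : ℕ} {μ ν : Fin n → ℕ} (hμ : IsPartition μ) (hν : IsPartition ν)
    (hne : ν ≠ μ) : coeff (expOf ν) (msymm μ) = 0 := by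
  rw [coeff_msymm]
  have : (Finset.univ.filter (fun σ : Equiv.Perm (Fin n) => μ ∘ ⇑σ = ν)) = ∅ := by
    apply Finset.eq_empty_of_forall_notMem
    intro σ hσ
    have h1 := (Finset.mem_filter.mp hσ).2
    have h2 : IsPartition (μ ∘ ⇑σ) := by rw [h1]; exact hν
    exact hne (by rw [← h1, partition_unique hμ σ h2])
  rw [this]
  simp

lemma coeff_msymm_self_ne_zero {n : ℕ} (μ : Fin n → ℕ) [CharZero K] :
    coeff (expOf μ) (msymm μ) ≠ 0 := by
  rw [coeff_msymm]
  have hmem : (1 : Equiv.Perm (Fin n)) ∈ Finset.univ.filter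
      (fun σ : Equiv.Perm (Fin n) => μ ∘ ⇑σ = μ) := by
    simp
  have hpos : 0 < (Finset.univ.filter
      (fun σ : Equiv.Perm (Fin n) => μ ∘ ⇑σ = μ)).card := Finset.card_pos.mpr ⟨1, hmem⟩
  exact Nat.cast_ne_zero.mpr hpos.ne'

lemma msymm_totalDegree {n : ℕ} (μ : Fin n → ℕ) : (msymm μ).totalDegree ≤ csize μ := by
  simp only [msymm]
  refine le_trans (MvPolynomial.totalDegree_finset_sum _ _) ?_
  apply Finset.sup_le
  intro σ _
  refine le_trans (MvPolynomial.totalDegree_monomial_le _ _) ?_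
  rw [Finsupp.sum_fintype _ _ (fun _ => rfl)]
  exact le_of_eq (Equiv.sum_comp σ μ)

lemma charZeroK : CharZero K :=
  charZero_of_injective_algebraMap (IsFractionRing.injective (MvPolynomial (Fin 2) ℚ) K)

/-- Normalized monomial symmetric polynomial. -/
def Bpoly {n : ℕ} (μ : Fin n → ℕ) : MvPolynomial (Fin n) K :=
  (coeff (expOf μ) (msymm μ))⁻¹ • msymm μ

lemma Bpoly_symmetric {n : ℕ} (μ : Fin n → ℕ) : (Bpoly μ).IsSymmetric := by
  intro τ
  rw [Bpoly, map_smul, msymm_symmetric μ τ]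

lemma Bpoly_totalDegree {n : ℕ} (μ : Fin n → ℕ) : (Bpoly μ).totalDegree ≤ csize μ :=
  le_trans (MvPolynomial.totalDegree_smul_le _ _) (msymm_totalDegree μ)

lemma Bpoly_coeff {n : ℕ} {μ ν : Fin n → ℕ} (hμ : IsPartition μ) (hν : IsPartition ν) :
    coeff (expOf ν) (Bpoly μ) = if ν = μ then 1 else 0 := by
  haveI : CharZero K := charZeroK
  rw [Bpoly, MvPolynomial.coeff_smul]
  by_cases h : ν = μ
  · rw [if_pos h, h, smul_eq_mul, inv_mul_cancel₀ (coeff_msymm_self_ne_zero μ)]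
  · rw [if_neg h, coeff_msymm_ne hμ hν h, smul_eq_mul, mul_zero]

end Stmt2Aux


open Stmt2Aux

set_option maxHeartbeats 1000000
set_option synthInstance.maxHeartbeats 200000

/-- existence and uniqueness of the interpolation Macdonald
polynomial `P*_λ`. -/
theorem statement2 (n : ℕ) (hn : 1 ≤ n) (l : Fin n → ℕ) (hl : IsPartition l) :
    ∃! P : MvPolynomial (Fin n) K, P.IsSymmetric ∧ P.totalDegree ≤ csize l ∧
      coeff (expOf l) P = 1 ∧
      ∀ ν : Fin n → ℕ, IsPartition ν → csize ν ≤ csize l → ν ≠ l →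
        eval (evalPt ν) P = 0 := by
  classical
  set d := csize l with hd
  set Lam : Finset (Fin n → ℕ) := (((Finset.univ : Finset (Fin n → Fin (d+1))).image
      (fun g : Fin n → Fin (d+1) => fun i => (g i : ℕ))).filter
      (fun ν => IsPartition ν ∧ csize ν ≤ d ∧ ν ≠ l)) with hLam
  have hmemLam : ∀ ν : Fin n → ℕ, ν ∈ Lam ↔ (IsPartition ν ∧ csize ν ≤ d ∧ ν ≠ l) := by
    intro ν
    rw [hLam, Finset.mem_filter]
    constructor
    · rintro ⟨-, h⟩; exact h
    · intro h
      refine ⟨Finset.mem_image.mpr ⟨fun i => ⟨ν i, ?_⟩, Finset.mem_univ _, ?_⟩, h⟩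
      · have h1 : ν i ≤ csize ν :=
          Finset.single_le_sum (f := ν) (fun j _ => Nat.zero_le _) (Finset.mem_univ i)
        exact Nat.lt_succ_of_le (le_trans h1 h.2.1)
      · funext i; rfl
  -- the partition attached to an index
  have Pa : ∀ μ : {x // x ∈ Lam}, IsPartition μ.1 := fun μ => ((hmemLam μ.1).mp μ.2).1
  have Sz : ∀ μ : {x // x ∈ Lam}, csize μ.1 ≤ d := fun μ => ((hmemLam μ.1).mp μ.2).2.1
  have Nl : ∀ μ : {x // x ∈ Lam}, μ.1 ≠ l := fun μ => ((hmemLam μ.1).mp μ.2).2.2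
  -- combination polynomial
  set G : ({x // x ∈ Lam} → K) → MvPolynomial (Fin n) K :=
    fun c => ∑ μ : {x // x ∈ Lam}, c μ • Bpoly μ.1 with hG
  have hGsym : ∀ c, (G c).IsSymmetric := by
    intro c τ
    rw [hG, map_sum]
    exact Finset.sum_congr rfl (fun μ _ => by rw [map_smul, Bpoly_symmetric μ.1 τ])
  have hGdeg : ∀ c, (G c).totalDegree ≤ d := by
    intro c
    refine le_trans (MvPolynomial.totalDegree_finset_sum _ _) (Finset.sup_le ?_)
    intro μ _
    exact le_trans (MvPolynomial.totalDegree_smul_le _ _) (le_trans (Bpoly_totalDegree μ.1) (Sz μ))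
  have hGcoeff : ∀ c (ν : Fin n → ℕ), IsPartition ν →
      coeff (expOf ν) (G c) = ∑ μ : {x // x ∈ Lam}, c μ * (if ν = μ.1 then 1 else 0) := by
    intro c ν hν
    rw [hG, MvPolynomial.coeff_sum]
    exact Finset.sum_congr rfl (fun μ _ => by
      rw [MvPolynomial.coeff_smul, Bpoly_coeff (Pa μ) hν, smul_eq_mul])
  have hGcoeff_mem : ∀ c (ν : {x // x ∈ Lam}), coeff (expOf ν.1) (G c) = c ν := by
    intro c ν
    rw [hGcoeff c ν.1 (Pa ν)]
    rw [Finset.sum_congr rfl (fun μ _ => by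
      rw [show (if ν.1 = μ.1 then (1:K) else 0) = (if μ = ν then (1:K) else 0) by
        by_cases h : μ = ν
        · rw [if_pos h, if_pos (by rw [h])]
        · rw [if_neg h, if_neg (fun hh => h (Subtype.ext hh.symm))]])]
    simp
  have hGcoeff_l : ∀ c, coeff (expOf l) (G c) = 0 := by
    intro c
    rw [hGcoeff c l hl]
    apply Finset.sum_eq_zero
    intro μ _
    rw [if_neg (fun hh => (Nl μ) hh.symm), mul_zero]
  have hGeval : ∀ c (x : Fin n → K), eval x (G c) = ∑ μ : {x // x ∈ Lam}, c μ * eval x (Bpoly μ.1) := by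
    intro c x
    rw [hG, map_sum]
    exact Finset.sum_congr rfl (fun μ _ => by
      rw [MvPolynomial.smul_eq_C_mul, (eval x).map_mul, MvPolynomial.eval_C])
  -- the matrix
  set M : Matrix {x // x ∈ Lam} {x // x ∈ Lam} K :=
    fun ν μ => eval (evalPt ν.1) (Bpoly μ.1) with hM
  have hMeval : ∀ c (ν : {x // x ∈ Lam}), M.mulVecLin c ν = eval (evalPt ν.1) (G c) := by
    intro c ν
    have h1 : M.mulVecLin c ν = ∑ μ : {x // x ∈ Lam}, M ν μ * c μ := by
      simp [Matrix.mulVecLin_apply, Matrix.mulVec, dotProduct]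
    rw [h1, hGeval]
    exact Finset.sum_congr rfl (fun μ _ => mul_comm _ _)
  -- injectivity
  have hinj : Function.Injective M.mulVecLin := by
    rw [injective_iff_map_eq_zero]
    intro c hc
    have hGzero : G c = 0 := by
      by_contra hg
      obtain ⟨μ0, hp0, hs0, hc0, he0⟩ := core (dd := d) hg (hGsym c) (hGdeg c)
      by_cases hμ0l : μ0 = l
      · rw [hμ0l, hGcoeff_l] at hc0; exact hc0 rfl
      · have hmem : μ0 ∈ Lam := (hmemLam μ0).mpr ⟨hp0, hs0, hμ0l⟩
        have h5 := hMeval c ⟨μ0, hmem⟩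
        rw [hc] at h5
        apply he0
        rw [← h5]
        simp
    funext ν
    have h6 := hGcoeff_mem c ν
    rw [hGzero] at h6
    simpa using h6.symm
  have hsurj := LinearMap.injective_iff_surjective.mp hinj
  obtain ⟨c, hcv⟩ := hsurj (fun ν : {x // x ∈ Lam} => - eval (evalPt ν.1) (Bpoly l))
  set P := Bpoly l + G c with hP
  have hPsym : P.IsSymmetric := fun τ => by rw [hP, map_add, Bpoly_symmetric l τ, hGsym c τ]
  have hPdeg : P.totalDegree ≤ csize l :=
    le_trans (MvPolynomial.totalDegree_add _ _) (max_le (Bpoly_totalDegree l) (hGdeg c))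
  have hPcoeff : coeff (expOf l) P = 1 := by
    rw [hP, MvPolynomial.coeff_add, hGcoeff_l, Bpoly_coeff hl hl, if_pos rfl, add_zero]
  have hPeval : ∀ ν : Fin n → ℕ, IsPartition ν → csize ν ≤ csize l → ν ≠ l →
      eval (evalPt ν) P = 0 := by
    intro ν h1 h2 h3
    have hmem : ν ∈ Lam := (hmemLam ν).mpr ⟨h1, h2, h3⟩
    have h4 := hMeval c ⟨ν, hmem⟩
    rw [hcv] at h4
    rw [hP, RingHom.map_add, ← h4]
    simp
  refine ⟨P, ⟨hPsym, hPdeg, hPcoeff, hPeval⟩, ?_⟩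
  intro Q hQ
  obtain ⟨hQsym, hQdeg, hQcoeff, hQeval⟩ := hQ
  by_contra hne
  have hD : Q - P ≠ 0 := sub_ne_zero.mpr hne
  have hDsym : (Q - P).IsSymmetric := fun τ => by rw [map_sub, hQsym τ, hPsym τ]
  have hDdeg : (Q - P).totalDegree ≤ d := by
    rw [sub_eq_add_neg]
    exact le_trans (MvPolynomial.totalDegree_add _ _)
      (max_le hQdeg (by rw [MvPolynomial.totalDegree_neg]; exact hPdeg))
  obtain ⟨μ0, hp0, hs0, hc0, he0⟩ := core (dd := d) hD hDsym hDdeg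
  by_cases hμ0l : μ0 = l
  · apply hc0
    rw [hμ0l, MvPolynomial.coeff_sub, hQcoeff, hPcoeff, sub_self]
  · apply he0
    rw [RingHom.map_sub, hQeval μ0 hp0 hs0 hμ0l, hPeval μ0 hp0 hs0 hμ0l, sub_self]
end
end
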